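/- arXiv:2101.02238 — 5 statements merged into one kernel-verified Lean document; each statement's English description precedes it below -/
import Mathlib

section
/- Suppose the speed function V is Lipschitz continuous. Let {E_k} be Borel probability measures on 𝒯_d × 𝒳 × 𝒯_a whose marginals ℱ(E_k) on 𝒯_d × 𝒳 belong to 𝒫_{m,G}, and suppose E_k ⇒ E weakly, where ℱ(E) ∈ 𝒫_{m,G}. Let z*_k and z* be the unique solutions in C(𝒯) of z(t) = ∫₀ᵗ V(ℱ(E_k)(S_s(z))) ds and z(t) = ∫₀ᵗ V(ℱ(E)(S_s(z))) ds, respectively. Then z*_k → z* in the uniform norm; that is, the characteristic travel distance is continuous with respect to the dis-aggregated in-flow measure. -/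
open MeasureTheory Set Filter Topology

noncomputable section

/-- `Sset Td Xs z t` is the set `S_t(z)` of pairs (departure time, trip length) of the
agents travelling at time `t` in a system with characteristic travel distance `z`:
`S_t(z) = {(τ, ξ) : τ ∈ [0,t] ∩ 𝒯_d, ξ ∈ (z(t) − z(τ), ∞) ∩ 𝒳}`. -/
def Sset (Td Xs : Set ℝ) (z : ℝ → ℝ) (t : ℝ) : Set (ℝ × ℝ) :=
  {p : ℝ × ℝ | p.1 ∈ Set.Icc 0 t ∩ Td ∧ p.2 ∈ Set.Ioi (z t - z p.1) ∩ Xs}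

/-- `memP Td Xs Ta m G F` says that `F ∈ 𝒫_{m,G}`: `F` is a Borel probability measure
on `𝒯_d × 𝒳` with `F(B) ≤ G·λ₂(B)` for every Borel `B` and whose `𝒳`-marginal agrees
with that of the demand profile `m`, i.e. `F(𝒯_d × Q) = m(Q × 𝒯_a)` for all Borel `Q`. -/
def memP (Td Xs Ta : Set ℝ) (m : Measure (ℝ × ℝ)) (G : ℝ) (F : Measure (ℝ × ℝ)) : Prop :=
  IsProbabilityMeasure F ∧ F ((Td ×ˢ Xs)ᶜ) = 0 ∧
    (∀ B : Set (ℝ × ℝ), MeasurableSet B → F B ≤ ENNReal.ofReal G * volume B) ∧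
    ∀ Q : Set ℝ, MeasurableSet Q → F (Td ×ˢ Q) = m (Q ×ˢ Ta)

/-- The map `𝒰(z, F)(t) = ∫₀ᵗ V(F(S_s(z))) ds`. -/
def Umap (Td Xs : Set ℝ) (V : ℝ → ℝ) (F : Measure (ℝ × ℝ)) (z : ℝ → ℝ) (t : ℝ) : ℝ :=
  ∫ s in (0:ℝ)..t, V ((F (Sset Td Xs z s)).toReal)

/-- The distance associated with the norm `‖u‖_M = sup_{t ∈ [0,Tmax]} e^{−Mt}|u(t)|`. -/
def dM (M Tmax : ℝ) (u w : ℝ → ℝ) : ℝ :=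
  ⨆ t : Set.Icc (0:ℝ) Tmax, Real.exp (-(M * t.1)) * |u t.1 - w t.1|

/-- `margF E` is the marginal `ℱ(E)` on `𝒯_d × 𝒳` of a measure `E` on
`𝒯_d × 𝒳 × 𝒯_a`, i.e. `ℱ(E)(A) = E(A × 𝒯_a)`. -/
def margF (E : Measure (ℝ × ℝ × ℝ)) : Measure (ℝ × ℝ) :=
  E.map (fun p => (p.1, p.2.1))


lemma tri (P e u : ℝ) (hP : 0 < P) (he : 0 < e) (hu : 0 ≤ u) (h : u < e / (2 * (P + 1))) :
    P * u < e / 2 := by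
  have h2 : u * (2 * (P + 1)) < e := (lt_div_iff₀ (by positivity)).mp h
  nlinarith [mul_nonneg hu hP.le]


lemma lemB (Xmin Xmax G : ℝ) (hXX : Xmin ≤ Xmax) (hG : 0 ≤ G)
    (Td : Set ℝ) (F : Measure (ℝ × ℝ)) [IsProbabilityMeasure F]
    (hle : ∀ B : Set (ℝ × ℝ), MeasurableSet B → F B ≤ ENNReal.ofReal G * volume B)
    (z w : ℝ → ℝ) (hz : Continuous z) (hw : Continuous w)
    (s t c : ℝ) (hs : 0 ≤ s) (hst : s ≤ t) (hc : 0 ≤ c)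
    (hh : ∀ τ ∈ Set.Icc 0 t, |z t - w s - z τ + w τ| ≤ c) :
    |(F (Sset Td (Set.Icc Xmin Xmax) z t)).toReal -
      (F (Sset Td (Set.Icc Xmin Xmax) w s)).toReal| ≤
      G * ((t - s) * (Xmax - Xmin) + 2 * c * t) := by
  set A := Sset Td (Set.Icc Xmin Xmax) z t with hA
  set B := Sset Td (Set.Icc Xmin Xmax) w s with hB
  set R1 : Set (ℝ × ℝ) := Set.Icc s t ×ˢ Set.Icc Xmin Xmax with hR1
  set R2 : Set (ℝ × ℝ) := {p : ℝ × ℝ | p.1 ∈ Set.Icc 0 t ∧ |p.2 - (z t - z p.1)| ≤ c}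
    with hR2
  have ht : 0 ≤ t := hs.trans hst
  have hR1m : MeasurableSet R1 := measurableSet_Icc.prod measurableSet_Icc
  have hR2m : MeasurableSet R2 := by
    have : IsClosed R2 := by
      have h1 : IsClosed {p : ℝ × ℝ | p.1 ∈ Set.Icc 0 t} :=
        isClosed_Icc.preimage continuous_fst
      have h2 : IsClosed {p : ℝ × ℝ | |p.2 - (z t - z p.1)| ≤ c} := by
        have : Continuous fun p : ℝ × ℝ => |p.2 - (z t - z p.1)| := by
          continuity
        exact isClosed_le this continuous_const
      exact h1.inter h2
    exact this.measurableSet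
  have hvol1 : volume R1 ≤ ENNReal.ofReal ((t - s) * (Xmax - Xmin)) := by
    rw [hR1, Measure.volume_eq_prod, Measure.prod_prod, Real.volume_Icc, Real.volume_Icc,
      ← ENNReal.ofReal_mul (by linarith)]
  have hvol2 : volume R2 ≤ ENNReal.ofReal (2 * c * t) := by
    rw [Measure.volume_eq_prod, Measure.prod_apply hR2m]
    have hbd : ∀ τ : ℝ, volume (Prod.mk τ ⁻¹' R2) ≤
        (Set.Icc (0:ℝ) t).indicator (fun _ => ENNReal.ofReal (2 * c)) τ := by
      intro τ
      by_cases hτ : τ ∈ Set.Icc (0:ℝ) t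
      · have hsub : Prod.mk τ ⁻¹' R2 ⊆ Set.Icc (z t - z τ - c) (z t - z τ + c) := by
          intro ξ hξ
          simp only [hR2, Set.mem_preimage, Set.mem_setOf_eq] at hξ
          have := abs_le.mp hξ.2
          constructor <;> linarith [this.1, this.2]
        calc volume (Prod.mk τ ⁻¹' R2) ≤ volume (Set.Icc (z t - z τ - c) (z t - z τ + c)) :=
              measure_mono hsub
          _ = ENNReal.ofReal (2 * c) := by rw [Real.volume_Icc]; ring_nf
          _ = _ := by rw [Set.indicator_of_mem hτ]
      · have : Prod.mk τ ⁻¹' R2 = ∅ := by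
          ext ξ; simp only [hR2, Set.mem_preimage, Set.mem_setOf_eq, Set.mem_empty_iff_false,
            iff_false]
          exact fun h => hτ h.1
        rw [this, Set.indicator_of_notMem hτ]
        simp
    calc ∫⁻ τ, volume (Prod.mk τ ⁻¹' R2) ≤
        ∫⁻ τ, (Set.Icc (0:ℝ) t).indicator (fun _ => ENNReal.ofReal (2 * c)) τ :=
          lintegral_mono hbd
      _ = ENNReal.ofReal (2 * c) * volume (Set.Icc (0:ℝ) t) := by
          rw [lintegral_indicator_const measurableSet_Icc]
      _ = ENNReal.ofReal (2 * c * t) := by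
          rw [Real.volume_Icc, ← ENNReal.ofReal_mul (by linarith)]
          ring_nf
  set D : ℝ := G * ((t - s) * (Xmax - Xmin) + 2 * c * t) with hD
  have hDnn : 0 ≤ D := by
    apply mul_nonneg hG
    have : 0 ≤ (t - s) * (Xmax - Xmin) := mul_nonneg (by linarith) (by linarith)
    nlinarith
  have hFD : ∀ S : Set (ℝ × ℝ), S ⊆ R1 ∪ R2 → F S ≤ ENNReal.ofReal D := by
    intro S hS
    calc F S ≤ F (R1 ∪ R2) := measure_mono hS
      _ ≤ F R1 + F R2 := measure_union_le _ _
      _ ≤ ENNReal.ofReal G * volume R1 + ENNReal.ofReal G * volume R2 :=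
          add_le_add (hle _ hR1m) (hle _ hR2m)
      _ ≤ ENNReal.ofReal G * ENNReal.ofReal ((t - s) * (Xmax - Xmin)) +
          ENNReal.ofReal G * ENNReal.ofReal (2 * c * t) :=
          add_le_add (mul_le_mul_right hvol1 _) (mul_le_mul_right hvol2 _)
      _ = ENNReal.ofReal D := by
          rw [← ENNReal.ofReal_mul hG, ← ENNReal.ofReal_mul hG,
            ← ENNReal.ofReal_add (mul_nonneg hG (mul_nonneg (sub_nonneg.mpr hst) (sub_nonneg.mpr hXX))) (mul_nonneg hG (by positivity))]
          rw [hD]; ring_nf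
  -- set inclusions
  have hsub1 : A \ B ⊆ R1 ∪ R2 := by
    rintro ⟨τ, ξ⟩ ⟨⟨⟨hτt, hτTd⟩, hξz, hξX⟩, hnB⟩
    simp only [hB, Sset, Set.mem_setOf_eq, Set.mem_inter_iff, not_and, Set.mem_Ioi] at hnB
    by_cases hτs : τ ∈ Set.Icc 0 s
    · right
      have hne : ¬ (w s - w τ < ξ) := by
        intro hlt
        exact hnB ⟨hτs, hτTd⟩ hlt hξX
      push_neg at hne
      refine ⟨hτt, ?_⟩
      have hh' := hh τ hτt
      rw [abs_le] at hh' ⊢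
      simp only [Set.mem_Ioi] at hξz
      constructor <;> [linarith [hh'.1]; linarith [hh'.2]]
    · left
      simp only [Set.mem_Icc, not_and, not_le] at hτs
      exact ⟨⟨le_of_lt (hτs hτt.1), hτt.2⟩, hξX⟩
  have hsub2 : B \ A ⊆ R1 ∪ R2 := by
    rintro ⟨τ, ξ⟩ ⟨⟨⟨hτs, hτTd⟩, hξw, hξX⟩, hnA⟩
    simp only [hA, Sset, Set.mem_setOf_eq, Set.mem_inter_iff, not_and, Set.mem_Ioi] at hnA
    have hτt : τ ∈ Set.Icc 0 t := ⟨hτs.1, hτs.2.trans hst⟩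
    have hne : ¬ (z t - z τ < ξ) := fun hlt => hnA ⟨hτt, hτTd⟩ hlt hξX
    push_neg at hne
    right
    refine ⟨hτt, ?_⟩
    have hh' := hh τ hτt
    rw [abs_le] at hh' ⊢
    simp only [Set.mem_Ioi] at hξw
    constructor <;> [linarith [hh'.1]; linarith [hh'.2]]
  -- put together
  have key : ∀ X Y : Set (ℝ × ℝ), X \ Y ⊆ R1 ∪ R2 →
      (F X).toReal ≤ (F Y).toReal + D := by
    intro X Y hXY
    have h1 : F X ≤ F Y + ENNReal.ofReal D := by
      calc F X ≤ F (Y ∪ X \ Y) := measure_mono (by intro p hp; by_cases h : p ∈ Y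
                                                   exacts [Or.inl h, Or.inr ⟨hp, h⟩])
        _ ≤ F Y + F (X \ Y) := measure_union_le _ _
        _ ≤ F Y + ENNReal.ofReal D := add_le_add_right (hFD _ hXY) _
    have h2 := ENNReal.toReal_mono (by finiteness) h1
    rwa [ENNReal.toReal_add (measure_ne_top _ _) ENNReal.ofReal_ne_top,
      ENNReal.toReal_ofReal hDnn] at h2
  rw [abs_sub_le_iff]
  exact ⟨by linarith [key A B hsub1], by linarith [key B A hsub2]⟩

lemma lemC (Tmax Xmin Xmax G : ℝ) (hT : 0 < Tmax) (hXX : Xmin < Xmax) (hG : 0 < G)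
    (Td : Set ℝ) (F : Measure (ℝ × ℝ)) [IsProbabilityMeasure F]
    (hle : ∀ B : Set (ℝ × ℝ), MeasurableSet B → F B ≤ ENNReal.ofReal G * volume B)
    (z : ℝ → ℝ) (hz : Continuous z) :
    ContinuousOn (fun u => (F (Sset Td (Set.Icc Xmin Xmax) z u)).toReal)
      (Set.Icc 0 Tmax) := by
  intro x hx
  rw [Metric.continuousWithinAt_iff]
  intro ε hε
  set ε1 := ε / (2 * (2 * G * Tmax + 1)) with hε1def
  have hε1 : 0 < ε1 := by positivity
  obtain ⟨δ0, hδ0, hzδ⟩ := Metric.continuousAt_iff.mp hz.continuousAt ε1 hε1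
  refine ⟨min δ0 (ε / (2 * (G * (Xmax - Xmin) + 1))), lt_min hδ0 (by have := sub_pos.mpr hXX; positivity), ?_⟩
  intro y hy hdy
  have hdy0 : dist y x < δ0 := lt_of_lt_of_le hdy (min_le_left _ _)
  have hdy1 : |y - x| < ε / (2 * (G * (Xmax - Xmin) + 1)) := by
    rw [← Real.dist_eq]; exact lt_of_lt_of_le hdy (min_le_right _ _)
  have hzxy : |z y - z x| < ε1 := by
    have := hzδ hdy0
    rwa [Real.dist_eq] at this
  rw [Real.dist_eq]
  have harith : ∀ a b : ℝ, 0 ≤ a → a ≤ Tmax → b - a ≤ |y - x| → |z b - z a| ≤ |z y - z x| →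
      b ≤ Tmax → a ≤ b →
      G * ((b - a) * (Xmax - Xmin) + 2 * |z b - z a| * b) < ε := by
    intro a b ha haT hba hzz hbT hab
    have h1 : G * ((b - a) * (Xmax - Xmin)) < ε / 2 := by
      have hP : 0 < G * (Xmax - Xmin) := mul_pos hG (by linarith)
      have hu : b - a < ε / (2 * (G * (Xmax - Xmin) + 1)) := lt_of_le_of_lt hba hdy1
      have := tri (G * (Xmax - Xmin)) ε (b - a) hP hε (by linarith) hu
      nlinarith
    have h2 : G * (2 * |z b - z a| * b) < ε / 2 := by
      have hz1 : |z b - z a| < ε1 := lt_of_le_of_lt hzz hzxy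
      have hb0 : 0 ≤ b := ha.trans hab
      have habs : 0 ≤ |z b - z a| := abs_nonneg _
      rw [hε1def] at hz1
      have hP2 : 0 < 2 * G * Tmax := by positivity
      have := tri (2 * G * Tmax) ε (|z b - z a|) hP2 hε habs hz1
      nlinarith [mul_nonneg (mul_nonneg hG.le habs) (sub_nonneg.mpr hbT)]
    calc G * ((b - a) * (Xmax - Xmin) + 2 * |z b - z a| * b)
        = G * ((b - a) * (Xmax - Xmin)) + G * (2 * |z b - z a| * b) := by ring
      _ < ε := by linarith
  rcases le_total x y with hxy | hxy
  · have key := lemB Xmin Xmax G hXX.le hG.le Td F hle z z hz hz x y (|z y - z x|)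
      hx.1 hxy (abs_nonneg _)
      (by intro τ _; rw [show z y - z x - z τ + z τ = z y - z x by ring])
    exact lt_of_le_of_lt key
      (harith x y hx.1 hx.2 (le_abs_self _) le_rfl hy.2 hxy)
  · have key := lemB Xmin Xmax G hXX.le hG.le Td F hle z z hz hz y x (|z x - z y|)
      hy.1 hxy (abs_nonneg _)
      (by intro τ _; rw [show z x - z y - z τ + z τ = z x - z y by ring])
    rw [abs_sub_comm] at key
    exact lt_of_le_of_lt key
      (harith y x hy.1 hy.2 (by rw [abs_sub_comm]; exact le_abs_self _)
        (by rw [abs_sub_comm (z x)]) hx.2 hxy)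

-- graph of continuous function has measure zero
lemma graph_null (g : ℝ → ℝ) (hg : Continuous g) :
    volume {p : ℝ × ℝ | p.2 = g p.1} = 0 := by
  have hm : MeasurableSet {p : ℝ × ℝ | p.2 = g p.1} :=
    (isClosed_eq continuous_snd (hg.comp continuous_fst)).measurableSet
  rw [Measure.volume_eq_prod, Measure.prod_apply hm]
  have : ∀ τ : ℝ, volume (Prod.mk τ ⁻¹' {p : ℝ × ℝ | p.2 = g p.1}) = 0 := by
    intro τ
    have : Prod.mk τ ⁻¹' {p : ℝ × ℝ | p.2 = g p.1} = {g τ} := by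
      ext ξ; simp [Set.mem_preimage]
    rw [this]; exact measure_singleton _
  simp [this]


lemma lemD (Tmax Xmin Xmax G : ℝ)
    (Td : Set ℝ)
    (Ek : ℕ → ProbabilityMeasure (ℝ × ℝ × ℝ)) (E : ProbabilityMeasure (ℝ × ℝ × ℝ))
    (hklenull : ∀ k, (margF (Ek k : Measure (ℝ × ℝ × ℝ))) ((Td ×ˢ Set.Icc Xmin Xmax)ᶜ) = 0)
    (hlenull : (margF (E : Measure (ℝ × ℝ × ℝ))) ((Td ×ˢ Set.Icc Xmin Xmax)ᶜ) = 0)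
    (hle : ∀ B : Set (ℝ × ℝ), MeasurableSet B →
      (margF (E : Measure (ℝ × ℝ × ℝ))) B ≤ ENNReal.ofReal G * volume B)
    (hconv : Filter.Tendsto Ek Filter.atTop (nhds E))
    (zs : ℝ → ℝ) (hzs : Continuous zs) (s : ℝ) :
    Filter.Tendsto
      (fun k => ((margF (Ek k : Measure (ℝ × ℝ × ℝ))) (Sset Td (Set.Icc Xmin Xmax) zs s)).toReal)
      Filter.atTop
      (nhds (((margF (E : Measure (ℝ × ℝ × ℝ))) (Sset Td (Set.Icc Xmin Xmax) zs s)).toReal)) := by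
  have hπ : Continuous (fun p : ℝ × ℝ × ℝ => (p.1, p.2.1)) :=
    continuous_fst.prodMk (continuous_snd.fst)
  set π := fun p : ℝ × ℝ × ℝ => (p.1, p.2.1) with hπdef
  set Fk' : ℕ → ProbabilityMeasure (ℝ × ℝ) :=
    fun k => (Ek k).map hπ.measurable.aemeasurable with hFk'
  set F' : ProbabilityMeasure (ℝ × ℝ) := E.map hπ.measurable.aemeasurable with hF'
  have hmargk : ∀ k, margF (Ek k : Measure (ℝ × ℝ × ℝ)) = (Fk' k : Measure (ℝ × ℝ)) := by
    intro k; simp [margF, hFk']; rfl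
  have hmarg : margF (E : Measure (ℝ × ℝ × ℝ)) = (F' : Measure (ℝ × ℝ)) := by
    simp [margF, hF']; rfl
  have hconv' : Tendsto Fk' atTop (𝓝 F') :=
    ProbabilityMeasure.tendsto_map_of_tendsto_of_continuous Ek E hconv hπ
  set S'' : Set (ℝ × ℝ) := {p : ℝ × ℝ | p.1 ∈ Set.Icc 0 s ∧ zs s - zs p.1 < p.2} with hS''
  -- frontier of S'' is null for F'
  have hnullb : (F' : Measure (ℝ × ℝ)) (frontier S'') = 0 := by
    have hC : S'' = (Prod.fst ⁻¹' Set.Icc 0 s) ∩ {p : ℝ × ℝ | zs s - zs p.1 < p.2} := by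
      ext p; simp [hS'']
    have hfr : frontier S'' ⊆
        (Prod.fst ⁻¹' ({0} : Set ℝ) ∪ Prod.fst ⁻¹' ({s} : Set ℝ)) ∪
          {p : ℝ × ℝ | p.2 = zs s - zs p.1} := by
      rw [hC]
      refine (frontier_inter_subset _ _).trans ?_
      intro p hp
      rcases hp with ⟨hp1, -⟩ | ⟨-, hp2⟩
      · left
        have h1 : frontier (Prod.fst ⁻¹' Set.Icc 0 s : Set (ℝ × ℝ)) ⊆
            Prod.fst ⁻¹' (frontier (Set.Icc 0 s)) :=
          continuous_fst.frontier_preimage_subset _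
        have hmem := h1 hp1
        rcases le_or_gt 0 s with hs | hs
        · rw [frontier_Icc hs] at hmem
          simp only [Set.mem_preimage, Set.mem_insert_iff, Set.mem_singleton_iff] at hmem
          rcases hmem with h | h
          · exact Or.inl (by simp [h])
          · exact Or.inr (by simp [h])
        · rw [Set.Icc_eq_empty (not_le.mpr hs), frontier_empty] at hmem
          exact absurd hmem (Set.notMem_empty _)
      · right
        have hopen : IsOpen {p : ℝ × ℝ | zs s - zs p.1 < p.2} :=
          isOpen_lt (continuous_const.sub (hzs.comp continuous_fst)) continuous_snd
        have hcl : closure {p : ℝ × ℝ | zs s - zs p.1 < p.2} ⊆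
            {p : ℝ × ℝ | zs s - zs p.1 ≤ p.2} :=
          closure_minimal (by intro q hq; exact le_of_lt (show zs s - zs q.1 < q.2 from hq))
            (isClosed_le (continuous_const.sub (hzs.comp continuous_fst)) continuous_snd)
        have hp2' := hp2
        rw [frontier, hopen.interior_eq] at hp2'
        have : zs s - zs p.1 ≤ p.2 := hcl hp2'.1
        have : ¬ (zs s - zs p.1 < p.2) := hp2'.2
        simp only [Set.mem_setOf_eq]
        linarith [le_of_not_gt this, ‹zs s - zs p.1 ≤ p.2›]
    have hvol : volume ((Prod.fst ⁻¹' ({0} : Set ℝ) ∪ Prod.fst ⁻¹' ({s} : Set ℝ)) ∪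
        {p : ℝ × ℝ | p.2 = zs s - zs p.1}) = 0 := by
      have l1 : volume (Prod.fst ⁻¹' ({0} : Set ℝ) : Set (ℝ × ℝ)) = 0 := by
        have : (Prod.fst ⁻¹' ({0} : Set ℝ) : Set (ℝ × ℝ)) = {(0:ℝ)} ×ˢ (Set.univ : Set ℝ) := by
          ext p; simp [Prod.ext_iff, eq_comm]
        rw [this, Measure.volume_eq_prod, Measure.prod_prod]
        simp
      have l2 : volume (Prod.fst ⁻¹' ({s} : Set ℝ) : Set (ℝ × ℝ)) = 0 := by
        have : (Prod.fst ⁻¹' ({s} : Set ℝ) : Set (ℝ × ℝ)) = {s} ×ˢ (Set.univ : Set ℝ) := by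
          ext p; simp [Prod.ext_iff, eq_comm]
        rw [this, Measure.volume_eq_prod, Measure.prod_prod]
        simp
      have l3 : volume {p : ℝ × ℝ | p.2 = zs s - zs p.1} = 0 :=
        graph_null (fun τ => zs s - zs τ) (continuous_const.sub hzs)
      refine le_antisymm ?_ zero_le
      calc volume _ ≤ volume (Prod.fst ⁻¹' ({0} : Set ℝ) ∪ Prod.fst ⁻¹' ({s} : Set ℝ))
            + volume {p : ℝ × ℝ | p.2 = zs s - zs p.1} := measure_union_le _ _
        _ ≤ (volume (Prod.fst ⁻¹' ({0} : Set ℝ) : Set (ℝ × ℝ))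
            + volume (Prod.fst ⁻¹' ({s} : Set ℝ) : Set (ℝ × ℝ))) + _ :=
            add_le_add_left (measure_union_le _ _) _
        _ = 0 := by rw [l1, l2, l3]; simp
    have hmeas : MeasurableSet ((Prod.fst ⁻¹' ({0} : Set ℝ) ∪ Prod.fst ⁻¹' ({s} : Set ℝ)) ∪
        {p : ℝ × ℝ | p.2 = zs s - zs p.1}) := by
      refine MeasurableSet.union (MeasurableSet.union ?_ ?_) ?_
      · exact (measurableSet_singleton _).preimage measurable_fst
      · exact (measurableSet_singleton _).preimage measurable_fst
      · exact (isClosed_eq continuous_snd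
          ((continuous_const.sub hzs).comp continuous_fst)).measurableSet
    refine le_antisymm ?_ zero_le
    calc (F' : Measure (ℝ × ℝ)) (frontier S'') ≤ (F' : Measure (ℝ × ℝ)) _ :=
          measure_mono hfr
      _ ≤ ENNReal.ofReal G * volume _ := by rw [← hmarg]; exact hle _ hmeas
      _ = 0 := by rw [hvol]; simp
  have key := ProbabilityMeasure.tendsto_measure_of_null_frontier_of_tendsto' hconv' hnullb
  -- identify the measures of S'' with those of Sset
  have hid : ∀ F : Measure (ℝ × ℝ), F ((Td ×ˢ Set.Icc Xmin Xmax)ᶜ) = 0 →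
      F (Sset Td (Set.Icc Xmin Xmax) zs s) = F S'' := by
    intro F h0
    have hset : Sset Td (Set.Icc Xmin Xmax) zs s = S'' ∩ (Td ×ˢ Set.Icc Xmin Xmax) := by
      ext p
      simp only [Sset, hS'', Set.mem_setOf_eq, Set.mem_inter_iff, Set.mem_Ioi,
        Set.mem_prod]
      tauto
    rw [hset]
    refine le_antisymm (measure_mono Set.inter_subset_left) ?_
    calc F S'' ≤ F (S'' ∩ (Td ×ˢ Set.Icc Xmin Xmax)) + F (S'' \ (Td ×ˢ Set.Icc Xmin Xmax)) :=
          measure_le_inter_add_diff _ _ _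
      _ ≤ F (S'' ∩ (Td ×ˢ Set.Icc Xmin Xmax)) + F ((Td ×ˢ Set.Icc Xmin Xmax)ᶜ) :=
          add_le_add_right (measure_mono fun p hp => hp.2) _
      _ = F (S'' ∩ (Td ×ˢ Set.Icc Xmin Xmax)) := by rw [h0, add_zero]
  have hconv2 : Tendsto (fun k => ((margF (Ek k : Measure (ℝ × ℝ × ℝ))) S''))
      atTop (𝓝 ((margF (E : Measure (ℝ × ℝ × ℝ))) S'')) := by
    simp only [hmargk, hmarg]
    exact key
  have hfin : (margF (E : Measure (ℝ × ℝ × ℝ))) S'' ≠ ⊤ := by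
    rw [hmarg]; exact measure_ne_top _ _
  have hlim := (ENNReal.tendsto_toReal hfin).comp hconv2
  have h1 : ∀ k, (margF (Ek k : Measure (ℝ × ℝ × ℝ))) (Sset Td (Set.Icc Xmin Xmax) zs s)
      = (margF (Ek k : Measure (ℝ × ℝ × ℝ))) S'' := fun k => hid _ (hklenull k)
  simp only [h1, hid _ hlenull]
  exact hlim

set_option maxHeartbeats 1000000 in
/-- Corollary 2: continuity of the characteristic travel distance with
respect to the dis-aggregated in-flow measure. If `V` is Lipschitz, `E_k ⇒ E` weakly
with `ℱ(E_k), ℱ(E) ∈ 𝒫_{m,G}`, and `z*_k, z*` are the characteristic travel distances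
associated with `ℱ(E_k), ℱ(E)`, then `z*_k → z*` uniformly on `𝒯`. -/
theorem characteristic_travel_distance_continuous_in_E
    (Tmax Xmin Xmax G : ℝ) (hT : 0 < Tmax) (hXmin : 0 < Xmin) (hXX : Xmin < Xmax)
    (hG : 0 < G)
    (Td Ta : Set ℝ) (hTdc : IsCompact Td) (hTd : Td ⊆ Set.Icc 0 Tmax)
    (hTac : IsCompact Ta) (hTa : Ta ⊆ Set.Icc 0 Tmax)
    (m : Measure (ℝ × ℝ)) (hm : IsProbabilityMeasure m)
    (V : ℝ → ℝ) (LV : NNReal) (hV : LipschitzOnWith LV V (Set.Ici 0))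
    (hVpos : ∀ c : ℝ, 0 ≤ c → 0 < V c)
    (Ek : ℕ → ProbabilityMeasure (ℝ × ℝ × ℝ)) (E : ProbabilityMeasure (ℝ × ℝ × ℝ))
    (hEk : ∀ k, memP Td (Set.Icc Xmin Xmax) Ta m G (margF (Ek k : Measure (ℝ × ℝ × ℝ))))
    (hEmem : memP Td (Set.Icc Xmin Xmax) Ta m G (margF (E : Measure (ℝ × ℝ × ℝ))))
    (hconv : Filter.Tendsto Ek Filter.atTop (nhds E))
    (zk : ℕ → ℝ → ℝ) (zs : ℝ → ℝ)
    (hzk : ∀ k, Continuous (zk k))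
    (hzkfix : ∀ k, ∀ t ∈ Set.Icc (0:ℝ) Tmax,
      zk k t = Umap Td (Set.Icc Xmin Xmax) V (margF (Ek k : Measure (ℝ × ℝ × ℝ))) (zk k) t)
    (hzs : Continuous zs)
    (hzsfix : ∀ t ∈ Set.Icc (0:ℝ) Tmax,
      zs t = Umap Td (Set.Icc Xmin Xmax) V (margF (E : Measure (ℝ × ℝ × ℝ))) zs t) :
    TendstoUniformlyOn (fun k => zk k) zs Filter.atTop (Set.Icc (0:ℝ) Tmax) := by
  classical
  set Xs : Set ℝ := Set.Icc Xmin Xmax with hXs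
  obtain ⟨hP0, hnull0, hle0, -⟩ := hEmem
  have hPk : ∀ k, IsProbabilityMeasure (margF (Ek k : Measure (ℝ × ℝ × ℝ))) := fun k => (hEk k).1
  have hnullk : ∀ k, (margF (Ek k : Measure (ℝ × ℝ × ℝ))) ((Td ×ˢ Xs)ᶜ) = 0 := fun k => (hEk k).2.1
  have hlek : ∀ k, ∀ B : Set (ℝ × ℝ), MeasurableSet B →
      (margF (Ek k : Measure (ℝ × ℝ × ℝ))) B ≤ ENNReal.ofReal G * volume B :=
    fun k => (hEk k).2.2.1
  haveI := hP0
  -- notation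
  set F0 : Measure (ℝ × ℝ) := margF (E : Measure (ℝ × ℝ × ℝ)) with hF0
  set Fk : ℕ → Measure (ℝ × ℝ) := fun k => margF (Ek k : Measure (ℝ × ℝ × ℝ)) with hFk
  set g0 : ℝ → ℝ := fun s => V ((F0 (Sset Td Xs zs s)).toReal) with hg0
  set gk0 : ℕ → ℝ → ℝ := fun k s => V ((Fk k (Sset Td Xs zs s)).toReal) with hgk0
  set gk1 : ℕ → ℝ → ℝ := fun k s => V ((Fk k (Sset Td Xs (zk k) s)).toReal) with hgk1
  -- continuity of the measure functions
  have hVcont : ContinuousOn V (Set.Ici 0) := hV.continuousOn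
  have hmapsTo : ∀ (F : Measure (ℝ × ℝ)) (z : ℝ → ℝ),
      Set.MapsTo (fun u => (F (Sset Td Xs z u)).toReal) (Set.Icc 0 Tmax) (Set.Ici 0) :=
    fun F z u _ => ENNReal.toReal_nonneg
  have hcont0 : ContinuousOn g0 (Set.Icc 0 Tmax) := by
    haveI := hP0
    exact hVcont.comp (lemC Tmax Xmin Xmax G hT hXX hG Td F0 hle0 zs hzs) (hmapsTo F0 zs)
  have hcontk0 : ∀ k, ContinuousOn (gk0 k) (Set.Icc 0 Tmax) := by
    intro k
    haveI := hPk k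
    exact hVcont.comp (lemC Tmax Xmin Xmax G hT hXX hG Td (Fk k) (hlek k) zs hzs)
      (hmapsTo (Fk k) zs)
  have hcontk1 : ∀ k, ContinuousOn (gk1 k) (Set.Icc 0 Tmax) := by
    intro k
    haveI := hPk k
    exact hVcont.comp (lemC Tmax Xmin Xmax G hT hXX hG Td (Fk k) (hlek k) (zk k) (hzk k))
      (hmapsTo (Fk k) (zk k))
  -- interval integrability on [0, t] for t in [0, Tmax]
  have hII : ∀ (f : ℝ → ℝ), ContinuousOn f (Set.Icc 0 Tmax) → ∀ t ∈ Set.Icc (0:ℝ) Tmax,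
      IntervalIntegrable f volume 0 t := by
    intro f hf t ht
    apply ContinuousOn.intervalIntegrable
    rw [Set.uIcc_of_le ht.1]
    exact hf.mono (Set.Icc_subset_Icc le_rfl ht.2)
  -- epsilon_k
  set eps : ℕ → ℝ := fun k => ∫ s in Set.Icc (0:ℝ) Tmax, |gk0 k s - g0 s| with heps
  have hepsnn : ∀ k, 0 ≤ eps k := fun k => integral_nonneg (fun s => abs_nonneg _)
  have hepsint : ∀ k, IntegrableOn (fun s => |gk0 k s - g0 s|) (Set.Icc 0 Tmax) := by
    intro k
    exact (((hcontk0 k).sub hcont0).abs).integrableOn_compact isCompact_Icc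
  have heps0 : Tendsto eps atTop (𝓝 0) := by
    have hdc := MeasureTheory.tendsto_integral_of_dominated_convergence
      (F := fun k s => |gk0 k s - g0 s|) (f := fun _ => (0:ℝ))
      (bound := fun _ => 2 * (LV : ℝ))
      (μ := volume.restrict (Set.Icc (0:ℝ) Tmax))
      (fun k => (((hcontk0 k).sub hcont0).abs).aestronglyMeasurable measurableSet_Icc)
      (integrable_const _)
      (fun k => ae_of_all _ fun s => ?_)
      (ae_of_all _ fun s => ?_)
    · simpa using hdc
    · -- bound
      have h1 : ((Fk k) (Sset Td Xs zs s)).toReal ∈ Set.Ici (0:ℝ) := ENNReal.toReal_nonneg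
      have h2 : ((F0) (Sset Td Xs zs s)).toReal ∈ Set.Ici (0:ℝ) := ENNReal.toReal_nonneg
      have hd := hV.dist_le_mul _ h1 _ h2
      rw [Real.dist_eq, Real.dist_eq] at hd
      have hb1 : ((Fk k) (Sset Td Xs zs s)).toReal ≤ 1 := by
        haveI := hPk k
        exact ENNReal.toReal_le_of_le_ofReal one_pos.le (by simpa using prob_le_one)
      have hb2 : ((F0) (Sset Td Xs zs s)).toReal ≤ 1 := by
        exact ENNReal.toReal_le_of_le_ofReal one_pos.le (by simpa using prob_le_one)
      have habs : |((Fk k) (Sset Td Xs zs s)).toReal - ((F0) (Sset Td Xs zs s)).toReal| ≤ 2 := by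
        rw [abs_le]; constructor <;> nlinarith [h1.out, h2.out]
      have hfin2 : |gk0 k s - g0 s| ≤ (LV : ℝ) * 2 :=
        le_trans hd (mul_le_mul_of_nonneg_left habs LV.2)
      have : (2:ℝ) * (LV : ℝ) = (LV : ℝ) * 2 := by ring
      simpa [Real.norm_eq_abs, abs_abs, this] using hfin2
    · -- pointwise limit
      have hten := lemD Tmax Xmin Xmax G Td Ek E hnullk hnull0 hle0 hconv zs hzs s
      have : Tendsto (fun k => |gk0 k s - g0 s|) atTop (𝓝 0) := by
        have hsq : ∀ k, |gk0 k s - g0 s| ≤ (LV : ℝ) *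
            |((Fk k) (Sset Td Xs zs s)).toReal - ((F0) (Sset Td Xs zs s)).toReal| := by
          intro k
          have hd := hV.dist_le_mul _ (ENNReal.toReal_nonneg :
            ((Fk k) (Sset Td Xs zs s)).toReal ∈ Set.Ici (0:ℝ))
            _ (ENNReal.toReal_nonneg : ((F0) (Sset Td Xs zs s)).toReal ∈ Set.Ici (0:ℝ))
          rw [Real.dist_eq, Real.dist_eq] at hd
          exact hd
        have hlim2 : Tendsto (fun k => (LV : ℝ) *
            |((Fk k) (Sset Td Xs zs s)).toReal - ((F0) (Sset Td Xs zs s)).toReal|)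
            atTop (𝓝 0) := by
          have hdiff0 : Tendsto (fun k =>
              ((Fk k) (Sset Td Xs zs s)).toReal - ((F0) (Sset Td Xs zs s)).toReal)
              atTop (𝓝 0) := by
            have h := hten.sub
              (tendsto_const_nhds (x := ((F0) (Sset Td Xs zs s)).toReal) (f := atTop))
            simpa [hF0, hFk, hXs] using h
          have h2 := hdiff0.abs.const_mul (LV : ℝ)
          simpa using h2
        exact squeeze_zero (fun k => abs_nonneg _) hsq hlim2
      exact this
  -- the contraction constant
  set M : ℝ := 1 + 8 * (LV : ℝ) * G * Tmax with hM
  have hM1 : 1 ≤ M := by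
    have h8 : (0:ℝ) ≤ 8 * (LV : ℝ) * G * Tmax :=
      mul_nonneg (mul_nonneg (mul_nonneg (by norm_num) LV.2) hG.le) hT.le
    linarith [hM.ge, hM.le]
  have hM0 : 0 < M := lt_of_lt_of_le one_pos hM1
  -- the weighted distance
  set dk : ℕ → ℝ := fun k => dM M Tmax (zk k) zs with hdk
  have hne : Nonempty (Set.Icc (0:ℝ) Tmax) := ⟨⟨0, le_refl 0, hT.le⟩⟩
  have hbddk : ∀ k, BddAbove (Set.range fun t : Set.Icc (0:ℝ) Tmax =>
      Real.exp (-(M * t.1)) * |zk k t.1 - zs t.1|) := by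
    intro k
    obtain ⟨t0, ht0mem, ht0⟩ := isCompact_Icc.exists_isMaxOn (Set.nonempty_Icc.mpr hT.le)
      (((hzk k).sub hzs).abs.continuousOn)
    refine ⟨|zk k t0 - zs t0|, ?_⟩
    rintro x ⟨t, rfl⟩
    have h1 : Real.exp (-(M * t.1)) ≤ 1 := by
      rw [Real.exp_le_one_iff]
      have := t.2.1
      nlinarith
    have h2 : |zk k t.1 - zs t.1| ≤ |zk k t0 - zs t0| := ht0 t.2
    exact le_trans (mul_le_of_le_one_left (abs_nonneg _) h1) h2
  have hled : ∀ k, ∀ t ∈ Set.Icc (0:ℝ) Tmax, |zk k t - zs t| ≤ Real.exp (M * t) * dk k := by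
    intro k t ht
    have h := le_ciSup (hbddk k) (⟨t, ht⟩ : Set.Icc (0:ℝ) Tmax)
    calc |zk k t - zs t|
        = Real.exp (M * t) * (Real.exp (-(M * t)) * |zk k t - zs t|) := by
          rw [← mul_assoc, ← Real.exp_add]; simp
      _ ≤ Real.exp (M * t) * dk k :=
          mul_le_mul_of_nonneg_left h (Real.exp_pos _).le
  have hdnn : ∀ k, 0 ≤ dk k := by
    intro k
    have h := le_ciSup (hbddk k) (⟨0, le_refl 0, hT.le⟩ : Set.Icc (0:ℝ) Tmax)
    exact le_trans (by positivity) h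
  -- main estimate
  have hmain : ∀ k, ∀ t ∈ Set.Icc (0:ℝ) Tmax,
      Real.exp (-(M * t)) * |zk k t - zs t| ≤ dk k / 2 + eps k := by
    intro k t ht
    haveI := hPk k
    -- pointwise contraction bound for the first integrand difference
    have hptw : ∀ s ∈ Set.Icc (0:ℝ) t, |gk1 k s - gk0 k s| ≤
        4 * (LV : ℝ) * G * Tmax * (Real.exp (M * s) * dk k) := by
      intro s hs
      have hsT : s ∈ Set.Icc (0:ℝ) Tmax := ⟨hs.1, hs.2.trans ht.2⟩
      have hc : (0:ℝ) ≤ 2 * Real.exp (M * s) * dk k :=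
        mul_nonneg (by positivity) (hdnn k)
      have hB := lemB Xmin Xmax G hXX.le hG.le Td (Fk k) (hlek k) (zk k) zs (hzk k) hzs
        s s (2 * Real.exp (M * s) * dk k) hs.1 le_rfl hc ?_
      · have hd := hV.dist_le_mul
          _ (ENNReal.toReal_nonneg : ((Fk k) (Sset Td Xs (zk k) s)).toReal ∈ Set.Ici (0:ℝ))
          _ (ENNReal.toReal_nonneg : ((Fk k) (Sset Td Xs zs s)).toReal ∈ Set.Ici (0:ℝ))
        rw [Real.dist_eq, Real.dist_eq] at hd
        have hGb : G * ((s - s) * (Xmax - Xmin) + 2 * (2 * Real.exp (M * s) * dk k) * s)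
            ≤ 4 * G * Tmax * (Real.exp (M * s) * dk k) := by
          have h1 : s ≤ Tmax := hsT.2
          have h2 : 0 ≤ Real.exp (M * s) * dk k :=
            mul_nonneg (Real.exp_pos _).le (hdnn k)
          nlinarith [mul_nonneg hG.le h2]
        calc |gk1 k s - gk0 k s| ≤ (LV : ℝ) *
              |((Fk k) (Sset Td Xs (zk k) s)).toReal - ((Fk k) (Sset Td Xs zs s)).toReal| := hd
          _ ≤ (LV : ℝ) * (G * ((s - s) * (Xmax - Xmin) +
              2 * (2 * Real.exp (M * s) * dk k) * s)) :=
              mul_le_mul_of_nonneg_left hB LV.2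
          _ ≤ (LV : ℝ) * (4 * G * Tmax * (Real.exp (M * s) * dk k)) :=
              mul_le_mul_of_nonneg_left hGb LV.2
          _ = 4 * (LV : ℝ) * G * Tmax * (Real.exp (M * s) * dk k) := by ring
      · intro τ hτ
        have hτT : τ ∈ Set.Icc (0:ℝ) Tmax := ⟨hτ.1, hτ.2.trans hsT.2⟩
        have e1 : |zk k s - zs s| ≤ Real.exp (M * s) * dk k := hled k s hsT
        have e2 : |zk k τ - zs τ| ≤ Real.exp (M * τ) * dk k := hled k τ hτT
        have e3 : Real.exp (M * τ) ≤ Real.exp (M * s) :=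
          Real.exp_le_exp.mpr (by nlinarith [hτ.2, hM0])
        calc |zk k s - zs s - zk k τ + zs τ| ≤ |zk k s - zs s| + |zk k τ - zs τ| := by
              have := abs_sub (zk k s - zs s) (zk k τ - zs τ)
              calc |zk k s - zs s - zk k τ + zs τ| = |(zk k s - zs s) - (zk k τ - zs τ)| := by
                    ring_nf
                _ ≤ |zk k s - zs s| + |zk k τ - zs τ| := abs_sub _ _
          _ ≤ Real.exp (M * s) * dk k + Real.exp (M * τ) * dk k := add_le_add e1 e2
          _ ≤ 2 * Real.exp (M * s) * dk k := by nlinarith [hdnn k]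
    -- integrability
    have hint1 : IntervalIntegrable (gk1 k) volume 0 t := hII _ (hcontk1 k) t ht
    have hint0 : IntervalIntegrable (gk0 k) volume 0 t := hII _ (hcontk0 k) t ht
    have hintg : IntervalIntegrable g0 volume 0 t := hII _ hcont0 t ht
    -- the difference identity
    have hdiff : zk k t - zs t = ∫ s in (0:ℝ)..t, (gk1 k s - g0 s) := by
      rw [hzkfix k t ht, hzsfix t ht]
      exact (intervalIntegral.integral_sub hint1 hintg).symm
    -- split
    have hsplit : |zk k t - zs t| ≤
        (∫ s in (0:ℝ)..t, |gk1 k s - gk0 k s|) + ∫ s in (0:ℝ)..t, |gk0 k s - g0 s| := by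
      rw [hdiff]
      calc |∫ s in (0:ℝ)..t, (gk1 k s - g0 s)| ≤ ∫ s in (0:ℝ)..t, |gk1 k s - g0 s| :=
            intervalIntegral.abs_integral_le_integral_abs ht.1
        _ ≤ ∫ s in (0:ℝ)..t, (|gk1 k s - gk0 k s| + |gk0 k s - g0 s|) := by
            apply intervalIntegral.integral_mono_on ht.1
              ((hint1.sub hintg).abs)
              (((hint1.sub hint0).abs).add ((hint0.sub hintg).abs))
            intro s _
            calc |gk1 k s - g0 s| = |(gk1 k s - gk0 k s) + (gk0 k s - g0 s)| := by ring_nf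
              _ ≤ |gk1 k s - gk0 k s| + |gk0 k s - g0 s| := abs_add_le _ _
        _ = _ := intervalIntegral.integral_add ((hint1.sub hint0).abs) ((hint0.sub hintg).abs)
    -- bound first integral
    have hb1 : (∫ s in (0:ℝ)..t, |gk1 k s - gk0 k s|) ≤
        4 * (LV : ℝ) * G * Tmax * dk k * ((Real.exp (M * t) - 1) / M) := by
      have hcexp : Continuous fun s : ℝ =>
          4 * (LV : ℝ) * G * Tmax * (Real.exp (M * s) * dk k) :=
        continuous_const.mul ((Real.continuous_exp.comp
          (continuous_const.mul continuous_id)).mul continuous_const)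
      have hmono := intervalIntegral.integral_mono_on ht.1 ((hint1.sub hint0).abs)
        (hcexp.intervalIntegrable 0 t) hptw
      calc (∫ s in (0:ℝ)..t, |gk1 k s - gk0 k s|)
          ≤ ∫ s in (0:ℝ)..t, 4 * (LV : ℝ) * G * Tmax * (Real.exp (M * s) * dk k) := hmono
        _ = 4 * (LV : ℝ) * G * Tmax * dk k * ∫ s in (0:ℝ)..t, Real.exp (M * s) := by
            rw [← intervalIntegral.integral_const_mul]
            congr 1; ext s; ring
        _ = 4 * (LV : ℝ) * G * Tmax * dk k * ((Real.exp (M * t) - 1) / M) := by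
            congr 1
            rw [intervalIntegral.integral_comp_mul_left (fun x => Real.exp x) (ne_of_gt hM0)]
            simp [integral_exp]
            ring
    -- bound second integral
    have hb2 : (∫ s in (0:ℝ)..t, |gk0 k s - g0 s|) ≤ eps k := by
      rw [intervalIntegral.integral_of_le ht.1]
      apply setIntegral_mono_set (hepsint k)
      · exact ae_of_all _ fun s => abs_nonneg _
      · exact HasSubset.Subset.eventuallyLE (fun s hs => ⟨le_of_lt hs.1, hs.2.trans ht.2⟩)
    -- combine
    have hC0 : (0:ℝ) ≤ 4 * (LV : ℝ) * G * Tmax * dk k :=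
      mul_nonneg (by positivity) (hdnn k)
    have hcomb : |zk k t - zs t| ≤
        4 * (LV : ℝ) * G * Tmax * dk k * (Real.exp (M * t) / M) + eps k := by
      have h1 : 4 * (LV : ℝ) * G * Tmax * dk k * ((Real.exp (M * t) - 1) / M) ≤
          4 * (LV : ℝ) * G * Tmax * dk k * (Real.exp (M * t) / M) := by
        apply mul_le_mul_of_nonneg_left _ hC0
        rw [sub_div]
        linarith [one_div_nonneg.mpr hM0.le]
      linarith [hsplit, hb1, hb2]
    have hexp : Real.exp (-(M * t)) * Real.exp (M * t) = 1 := by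
      rw [← Real.exp_add]; simp
    have hBle : Real.exp (-(M * t)) ≤ 1 := by
      rw [Real.exp_le_one_iff]
      nlinarith [ht.1, hM0]
    have hstep : Real.exp (-(M * t)) * |zk k t - zs t| ≤
        4 * (LV : ℝ) * G * Tmax * dk k / M + eps k := by
      have h2 := mul_le_mul_of_nonneg_left hcomb (Real.exp_pos (-(M * t))).le
      have h3 : Real.exp (-(M * t)) * (4 * (LV : ℝ) * G * Tmax * dk k * (Real.exp (M * t) / M))
          = 4 * (LV : ℝ) * G * Tmax * dk k / M := by
        rw [show Real.exp (-(M * t)) * (4 * (LV : ℝ) * G * Tmax * dk k * (Real.exp (M * t) / M))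
          = (4 * (LV : ℝ) * G * Tmax * dk k / M) * (Real.exp (-(M * t)) * Real.exp (M * t))
          by ring, hexp, mul_one]
      have h4 : Real.exp (-(M * t)) * eps k ≤ eps k := by
        nlinarith [hepsnn k]
      calc Real.exp (-(M * t)) * |zk k t - zs t|
          ≤ Real.exp (-(M * t)) * (4 * (LV : ℝ) * G * Tmax * dk k * (Real.exp (M * t) / M)
            + eps k) := h2
        _ = 4 * (LV : ℝ) * G * Tmax * dk k / M + Real.exp (-(M * t)) * eps k := by
            rw [mul_add, h3]
        _ ≤ 4 * (LV : ℝ) * G * Tmax * dk k / M + eps k := by linarith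
    have hhalf : 4 * (LV : ℝ) * G * Tmax * dk k / M ≤ dk k / 2 := by
      rw [div_le_div_iff₀ hM0 two_pos]
      nlinarith [hdnn k, mul_nonneg (mul_nonneg (mul_nonneg LV.2 hG.le) hT.le) (hdnn k)]
    linarith
  -- conclude
  have hdk2 : ∀ k, dk k ≤ 2 * eps k := by
    intro k
    have hs : dk k ≤ dk k / 2 + eps k := ciSup_le (fun t => hmain k t.1 t.2)
    linarith
  rw [Metric.tendstoUniformlyOn_iff]
  intro ε hε
  have hpos : 0 < ε / (2 * Real.exp (M * Tmax) + 1) := by positivity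
  have hev : ∀ᶠ k in atTop, eps k < ε / (2 * Real.exp (M * Tmax) + 1) := by
    have := heps0
    exact this.eventually (gt_mem_nhds hpos)
  filter_upwards [hev] with k hk
  intro t ht
  rw [Real.dist_eq, abs_sub_comm]
  have h1 : |zk k t - zs t| ≤ Real.exp (M * t) * dk k := hled k t ht
  have h2 : Real.exp (M * t) ≤ Real.exp (M * Tmax) :=
    Real.exp_le_exp.mpr (by nlinarith [ht.2, hM0])
  have h3 : Real.exp (M * t) * dk k ≤ Real.exp (M * Tmax) * (2 * eps k) := by
    have := hdk2 k
    nlinarith [hdnn k, Real.exp_pos (M * t), Real.exp_pos (M * Tmax), hepsnn k]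
  have h4 : Real.exp (M * Tmax) * (2 * eps k) < ε := by
    have hd0 : 0 < 2 * Real.exp (M * Tmax) + 1 := by positivity
    have h5 : eps k * (2 * Real.exp (M * Tmax) + 1) < ε := (lt_div_iff₀ hd0).mp hk
    nlinarith [hepsnn k, Real.exp_pos (M * Tmax)]
  linarith
end
end

section
/- Fix M > 0 such that Λ := 2·G·Lip(V)·(M·T_max − 1 + e^{−M·T_max})/M² < 1, and suppose V(c) ≤ V_max for all c ≥ 0. For F, F′ ∈ 𝒫_{m,G}, let z_F, z_{F′} ∈ C(𝒯) denote the respective unique characteristic travel distances (solutions of z(t) = ∫₀ᵗ V(F(S_s(z))) ds and z(t) = ∫₀ᵗ V(F′(S_s(z))) ds). Then for all t, t′ ∈ 𝒯, |z_F(t) − z_{F′}(t′)| ≤ e^{M·T_max}·(Lip(V)/(1 − Λ))·∫₀^{T_max} |F(S_s(z_F)) − F′(S_s(z_F))| ds + V_max·|t − t′|. -/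
open MeasureTheory Set Filter

noncomputable section

lemma CTD_abs_toReal_sub_le {F : Measure (ℝ × ℝ)} [IsFiniteMeasure F] {A B : Set (ℝ × ℝ)} {x : ℝ}
    (hx : 0 ≤ x) (h1 : F (A \ B) ≤ ENNReal.ofReal x) (h2 : F (B \ A) ≤ ENNReal.ofReal x) :
    |(F A).toReal - (F B).toReal| ≤ x := by
  have key : ∀ C D : Set (ℝ × ℝ), F (C \ D) ≤ ENNReal.ofReal x →
      (F C).toReal - (F D).toReal ≤ x := by
    intro C D h
    have hC : F C ≤ F D + ENNReal.ofReal x := by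
      calc F C ≤ F (D ∪ C \ D) := measure_mono (by intro p hp; by_cases hD : p ∈ D <;> simp [hD, hp])
        _ ≤ F D + F (C \ D) := measure_union_le _ _
        _ ≤ F D + ENNReal.ofReal x := add_le_add_right h _
    have hfin : F D + ENNReal.ofReal x ≠ ⊤ := by
      simp [ENNReal.add_ne_top, measure_ne_top]
    have := ENNReal.toReal_mono hfin hC
    rw [ENNReal.toReal_add (measure_ne_top F D) ENNReal.ofReal_ne_top,
      ENNReal.toReal_ofReal hx] at this
    linarith
  rw [abs_sub_le_iff]
  exact ⟨key A B h1, key B A h2⟩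


lemma CTD_volume_region_le {l r : ℝ → ℝ} (hl : Continuous l) (hr : Continuous r) {s : ℝ}
    (hs : 0 ≤ s) :
    volume {p : ℝ × ℝ | p.1 ∈ Set.Icc 0 s ∧ p.2 ∈ Set.Ioc (l p.1) (r p.1)} ≤
      ENNReal.ofReal (∫ τ in (0:ℝ)..s, |r τ - l τ|) := by
  set E := {p : ℝ × ℝ | p.1 ∈ Set.Icc 0 s ∧ p.2 ∈ Set.Ioc (l p.1) (r p.1)} with hE
  have hEm : MeasurableSet E := by
    have h1 : E = (Prod.fst ⁻¹' Set.Icc 0 s) ∩ ({p : ℝ × ℝ | l p.1 < p.2} ∩ {p : ℝ × ℝ | p.2 ≤ r p.1}) := by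
      ext p; simp [hE, Set.mem_Ioc, and_assoc]
    rw [h1]
    exact (measurable_fst measurableSet_Icc).inter
      (((isOpen_lt (hl.comp continuous_fst) continuous_snd).measurableSet).inter
        ((isClosed_le continuous_snd (hr.comp continuous_fst)).measurableSet))
  calc volume E = (volume.prod volume) E := by rw [← Measure.volume_eq_prod]
    _ = ∫⁻ x, volume (Prod.mk x ⁻¹' E) := Measure.prod_apply hEm
    _ ≤ ∫⁻ x, Set.indicator (Set.Icc 0 s) (fun x => ENNReal.ofReal |r x - l x|) x := by
        apply lintegral_mono
        intro x
        show volume (Prod.mk x ⁻¹' E) ≤ _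
        by_cases hx : x ∈ Set.Icc (0:ℝ) s
        · have hpre : Prod.mk x ⁻¹' E = Set.Ioc (l x) (r x) := by
            ext y
            simp only [hE, Set.mem_preimage, Set.mem_setOf_eq, Set.mem_Ioc]
            exact ⟨fun h => h.2, fun h => ⟨hx, h⟩⟩
          rw [hpre, Set.indicator_of_mem hx, Real.volume_Ioc]
          exact ENNReal.ofReal_le_ofReal (le_abs_self _)
        · have hpre : Prod.mk x ⁻¹' E = ∅ := by
            ext y
            simp only [hE, Set.mem_preimage, Set.mem_setOf_eq, Set.mem_empty_iff_false, iff_false]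
            rintro ⟨h1, _⟩; exact hx h1
          simp [hpre, Set.indicator_of_notMem hx]
    _ = ∫⁻ x in Set.Icc 0 s, ENNReal.ofReal |r x - l x| := by
        rw [lintegral_indicator]; exact measurableSet_Icc
    _ = ENNReal.ofReal (∫ x in Set.Icc 0 s, |r x - l x|) := by
        rw [ofReal_integral_eq_lintegral_ofReal]
        · exact ((hr.sub hl).abs.integrableOn_Icc)
        · exact Filter.Eventually.of_forall fun x => abs_nonneg _
    _ = ENNReal.ofReal (∫ τ in (0:ℝ)..s, |r τ - l τ|) := by
        rw [intervalIntegral.integral_of_le hs, integral_Icc_eq_integral_Ioc]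


lemma CTD_key1 {Td : Set ℝ} {Xl Xu : ℝ} {z z' : ℝ → ℝ} (hz : Continuous z) (hz' : Continuous z')
    {F : Measure (ℝ × ℝ)} [IsProbabilityMeasure F] {G : ℝ} (hG : 0 ≤ G)
    (hle : ∀ B : Set (ℝ × ℝ), MeasurableSet B → F B ≤ ENNReal.ofReal G * volume B)
    {s : ℝ} (hs : 0 ≤ s) :
    |(F (Sset Td (Set.Icc Xl Xu) z s)).toReal - (F (Sset Td (Set.Icc Xl Xu) z' s)).toReal|
      ≤ G * ∫ τ in (0:ℝ)..s, |(z s - z τ) - (z' s - z' τ)| := by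
  set l := fun τ => min (z s - z τ) (z' s - z' τ) with hldef
  set r := fun τ => max (z s - z τ) (z' s - z' τ) with hrdef
  have hlc : Continuous l := (continuous_const.sub hz).min (continuous_const.sub hz')
  have hrc : Continuous r := (continuous_const.sub hz).max (continuous_const.sub hz')
  set E := {p : ℝ × ℝ | p.1 ∈ Set.Icc 0 s ∧ p.2 ∈ Set.Ioc (l p.1) (r p.1)} with hEdef
  have hEm : MeasurableSet E := by
    have h1 : E = (Prod.fst ⁻¹' Set.Icc 0 s) ∩ ({p : ℝ × ℝ | l p.1 < p.2} ∩ {p : ℝ × ℝ | p.2 ≤ r p.1}) := by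
      ext p; simp [hEdef, Set.mem_Ioc, and_assoc]
    rw [h1]
    exact (measurable_fst measurableSet_Icc).inter
      (((isOpen_lt (hlc.comp continuous_fst) continuous_snd).measurableSet).inter
        ((isClosed_le continuous_snd (hrc.comp continuous_fst)).measurableSet))
  have hrl : ∀ τ, |r τ - l τ| = |(z s - z τ) - (z' s - z' τ)| := by
    intro τ
    simp only [hrdef, hldef]
    have hmm : min (z s - z τ) (z' s - z' τ) ≤ max (z s - z τ) (z' s - z' τ) :=
      le_trans (min_le_left _ _) (le_max_left _ _)
    rw [abs_of_nonneg (sub_nonneg.mpr hmm), max_sub_min_eq_abs, abs_sub_comm]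
  have hInn : 0 ≤ ∫ τ in (0:ℝ)..s, |(z s - z τ) - (z' s - z' τ)| :=
    intervalIntegral.integral_nonneg hs fun τ _ => abs_nonneg _
  have hvol : volume E ≤ ENNReal.ofReal (∫ τ in (0:ℝ)..s, |(z s - z τ) - (z' s - z' τ)|) := by
    have := CTD_volume_region_le hlc hrc hs
    simpa only [hrl] using this
  have hFE : F E ≤ ENNReal.ofReal (G * ∫ τ in (0:ℝ)..s, |(z s - z τ) - (z' s - z' τ)|) := by
    calc F E ≤ ENNReal.ofReal G * volume E := hle E hEm
      _ ≤ ENNReal.ofReal G * ENNReal.ofReal (∫ τ in (0:ℝ)..s, |(z s - z τ) - (z' s - z' τ)|) :=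
          mul_le_mul_right hvol _
      _ = ENNReal.ofReal (G * ∫ τ in (0:ℝ)..s, |(z s - z τ) - (z' s - z' τ)|) :=
          (ENNReal.ofReal_mul hG).symm
  have hsub1 : Sset Td (Set.Icc Xl Xu) z s \ Sset Td (Set.Icc Xl Xu) z' s ⊆ E := by
    rintro ⟨τ, ξ⟩ ⟨hA, hB⟩
    obtain ⟨⟨hτ1, hτ2⟩, hξ1, hξ2⟩ := hA
    have hξle : ξ ≤ z' s - z' τ := by
      by_contra hcon
      exact hB ⟨⟨hτ1, hτ2⟩, lt_of_not_ge hcon, hξ2⟩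
    refine ⟨hτ1, ?_, ?_⟩
    · exact lt_of_le_of_lt (min_le_left _ _) hξ1
    · exact le_trans hξle (le_max_right _ _)
  have hsub2 : Sset Td (Set.Icc Xl Xu) z' s \ Sset Td (Set.Icc Xl Xu) z s ⊆ E := by
    rintro ⟨τ, ξ⟩ ⟨hA, hB⟩
    obtain ⟨⟨hτ1, hτ2⟩, hξ1, hξ2⟩ := hA
    have hξle : ξ ≤ z s - z τ := by
      by_contra hcon
      exact hB ⟨⟨hτ1, hτ2⟩, lt_of_not_ge hcon, hξ2⟩
    refine ⟨hτ1, ?_, ?_⟩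
    · exact lt_of_le_of_lt (min_le_right _ _) hξ1
    · exact le_trans hξle (le_max_left _ _)
  exact CTD_abs_toReal_sub_le (mul_nonneg hG hInn)
    (le_trans (measure_mono hsub1) hFE) (le_trans (measure_mono hsub2) hFE)

/-- Key lemma 2: dependence of `F (S_s z)` on `s`. -/


lemma CTD_key2 {Td : Set ℝ} {Xl Xu : ℝ} (hX : Xl ≤ Xu) {z : ℝ → ℝ} (hz : Continuous z)
    {F : Measure (ℝ × ℝ)} [IsProbabilityMeasure F] {G : ℝ} (hG : 0 ≤ G)
    (hle : ∀ B : Set (ℝ × ℝ), MeasurableSet B → F B ≤ ENNReal.ofReal G * volume B)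
    {s s' : ℝ} (hs : 0 ≤ s) (hss' : s ≤ s') :
    |(F (Sset Td (Set.Icc Xl Xu) z s')).toReal - (F (Sset Td (Set.Icc Xl Xu) z s)).toReal|
      ≤ G * (s * |z s' - z s| + (s' - s) * (Xu - Xl)) := by
  set l := fun τ => min (z s' - z τ) (z s - z τ) with hldef
  set r := fun τ => max (z s' - z τ) (z s - z τ) with hrdef
  have hlc : Continuous l := (continuous_const.sub hz).min (continuous_const.sub hz)
  have hrc : Continuous r := (continuous_const.sub hz).max (continuous_const.sub hz)
  set E := {p : ℝ × ℝ | p.1 ∈ Set.Icc 0 s ∧ p.2 ∈ Set.Ioc (l p.1) (r p.1)} with hEdef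
  set St := Set.Ioc s s' ×ˢ Set.Icc Xl Xu with hStdef
  have hEm : MeasurableSet E := by
    have h1 : E = (Prod.fst ⁻¹' Set.Icc 0 s) ∩ ({p : ℝ × ℝ | l p.1 < p.2} ∩ {p : ℝ × ℝ | p.2 ≤ r p.1}) := by
      ext p; simp [hEdef, Set.mem_Ioc, and_assoc]
    rw [h1]
    exact (measurable_fst measurableSet_Icc).inter
      (((isOpen_lt (hlc.comp continuous_fst) continuous_snd).measurableSet).inter
        ((isClosed_le continuous_snd (hrc.comp continuous_fst)).measurableSet))
  have hStm : MeasurableSet St := measurableSet_Ioc.prod measurableSet_Icc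
  have hrl : ∀ τ, |r τ - l τ| = |z s' - z s| := by
    intro τ
    simp only [hrdef, hldef]
    have hmm : min (z s' - z τ) (z s - z τ) ≤ max (z s' - z τ) (z s - z τ) :=
      le_trans (min_le_left _ _) (le_max_left _ _)
    rw [abs_of_nonneg (sub_nonneg.mpr hmm), max_sub_min_eq_abs, abs_sub_comm]
    congr 1; ring
  have hvolE : volume E ≤ ENNReal.ofReal (s * |z s' - z s|) := by
    have h := CTD_volume_region_le hlc hrc hs
    simp only [hrl] at h
    rw [intervalIntegral.integral_const, smul_eq_mul, sub_zero] at h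
    exact h
  have hvolSt : volume St = ENNReal.ofReal ((s' - s) * (Xu - Xl)) := by
    rw [hStdef, Measure.volume_eq_prod, Measure.prod_prod, Real.volume_Ioc, Real.volume_Icc,
      ← ENNReal.ofReal_mul (by linarith)]
  have hFbound : F (E ∪ St) ≤ ENNReal.ofReal (G * (s * |z s' - z s| + (s' - s) * (Xu - Xl))) := by
    calc F (E ∪ St) ≤ F E + F St := measure_union_le _ _
      _ ≤ ENNReal.ofReal G * volume E + ENNReal.ofReal G * volume St :=
          add_le_add (hle E hEm) (hle St hStm)
      _ ≤ ENNReal.ofReal G * (ENNReal.ofReal (s * |z s' - z s|)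
            + ENNReal.ofReal ((s' - s) * (Xu - Xl))) := by
          rw [mul_add]
          exact add_le_add (mul_le_mul_right hvolE _) (mul_le_mul_right hvolSt.le _)
      _ = ENNReal.ofReal (G * (s * |z s' - z s| + (s' - s) * (Xu - Xl))) := by
          rw [← ENNReal.ofReal_add (by positivity) (by nlinarith [abs_nonneg (z s' - z s)]),
            ← ENNReal.ofReal_mul hG]
  have hx : 0 ≤ G * (s * |z s' - z s| + (s' - s) * (Xu - Xl)) :=
    mul_nonneg hG (add_nonneg (mul_nonneg hs (abs_nonneg _))
      (mul_nonneg (by linarith) (by linarith)))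
  have hsub1 : Sset Td (Set.Icc Xl Xu) z s' \ Sset Td (Set.Icc Xl Xu) z s ⊆ E ∪ St := by
    rintro ⟨τ, ξ⟩ ⟨hA, hB⟩
    obtain ⟨⟨hτ1, hτ2⟩, hξ1, hξ2⟩ := hA
    rcases le_or_gt τ s with hcase | hcase
    · left
      have hτIcc : τ ∈ Set.Icc (0:ℝ) s := ⟨hτ1.1, hcase⟩
      have hξle : ξ ≤ z s - z τ := by
        by_contra hcon
        exact hB ⟨⟨hτIcc, hτ2⟩, lt_of_not_ge hcon, hξ2⟩
      exact ⟨hτIcc, lt_of_le_of_lt (min_le_left _ _) hξ1, le_trans hξle (le_max_right _ _)⟩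
    · right
      exact ⟨⟨hcase, hτ1.2⟩, hξ2⟩
  have hsub2 : Sset Td (Set.Icc Xl Xu) z s \ Sset Td (Set.Icc Xl Xu) z s' ⊆ E ∪ St := by
    rintro ⟨τ, ξ⟩ ⟨hA, hB⟩
    obtain ⟨⟨hτ1, hτ2⟩, hξ1, hξ2⟩ := hA
    left
    have hξle : ξ ≤ z s' - z τ := by
      by_contra hcon
      exact hB ⟨⟨⟨hτ1.1, le_trans hτ1.2 hss'⟩, hτ2⟩, lt_of_not_ge hcon, hξ2⟩
    exact ⟨hτ1, lt_of_le_of_lt (min_le_right _ _) hξ1, le_trans hξle (le_max_left _ _)⟩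
  exact CTD_abs_toReal_sub_le hx
    (le_trans (measure_mono hsub1) hFbound) (le_trans (measure_mono hsub2) hFbound)


lemma CTD_cont {Td : Set ℝ} {Xl Xu : ℝ} (hX : Xl ≤ Xu) {z : ℝ → ℝ} (hz : Continuous z)
    {F : Measure (ℝ × ℝ)} [IsProbabilityMeasure F] {G : ℝ} (hG : 0 ≤ G)
    (hle : ∀ B : Set (ℝ × ℝ), MeasurableSet B → F B ≤ ENNReal.ofReal G * volume B)
    {Tmax : ℝ} (hT : 0 < Tmax) :
    ContinuousOn (fun s => (F (Sset Td (Set.Icc Xl Xu) z s)).toReal) (Set.Icc 0 Tmax) := by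
  intro s₀ hs₀
  set a := fun s => (F (Sset Td (Set.Icc Xl Xu) z s)).toReal with hadef
  have key : ∀ s ∈ Set.Icc (0:ℝ) Tmax,
      |a s - a s₀| ≤ G * (Tmax * |z s - z s₀| + |s - s₀| * (Xu - Xl)) := by
    intro s hs
    rcases le_total s s₀ with hc | hc
    · have h := CTD_key2 (Td := Td) hX hz hG hle hs.1 hc
      rw [abs_sub_comm (a s) (a s₀)]
      refine le_trans h ?_
      have h1 : |z s₀ - z s| = |z s - z s₀| := abs_sub_comm _ _
      have h2 : s₀ - s ≤ |s - s₀| := by rw [abs_sub_comm]; exact le_abs_self _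
      have h3 : s ≤ Tmax := hs.2
      have h4 : (0:ℝ) ≤ |z s - z s₀| := abs_nonneg _
      rw [h1]
      apply mul_le_mul_of_nonneg_left _ hG
      have := mul_le_mul_of_nonneg_right h2 (by linarith : (0:ℝ) ≤ Xu - Xl)
      nlinarith
    · have h := CTD_key2 (Td := Td) hX hz hG hle hs₀.1 hc
      refine le_trans h ?_
      have h2 : s - s₀ ≤ |s - s₀| := le_abs_self _
      have h3 : s₀ ≤ Tmax := hs₀.2
      have h4 : (0:ℝ) ≤ |z s - z s₀| := abs_nonneg _
      apply mul_le_mul_of_nonneg_left _ hG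
      have := mul_le_mul_of_nonneg_right h2 (by linarith : (0:ℝ) ≤ Xu - Xl)
      nlinarith
  have hgcont : Continuous fun s => G * (Tmax * |z s - z s₀| + |s - s₀| * (Xu - Xl)) := by
    fun_prop
  have hg0 : Tendsto (fun s => G * (Tmax * |z s - z s₀| + |s - s₀| * (Xu - Xl)))
      (nhdsWithin s₀ (Set.Icc 0 Tmax)) (nhds 0) := by
    have h1 := (hgcont.tendsto s₀).mono_left (nhdsWithin_le_nhds (s := Set.Icc 0 Tmax))
    simpa using h1
  have hdist : Tendsto (fun s => dist (a s) (a s₀)) (nhdsWithin s₀ (Set.Icc 0 Tmax)) (nhds 0) := by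
    apply squeeze_zero' (Filter.Eventually.of_forall fun s => dist_nonneg) _ hg0
    filter_upwards [self_mem_nhdsWithin] with s hs
    rw [Real.dist_eq]
    exact key s hs
  exact tendsto_iff_dist_tendsto_zero.mpr hdist


lemma CTD_exp_mono {M t T : ℝ} (hM : 0 < M) (h0 : 0 ≤ t) (ht : t ≤ T) :
    M * t - 1 + Real.exp (-(M * t)) ≤ M * T - 1 + Real.exp (-(M * T)) := by
  have h1 : Real.exp (-(M * T)) = Real.exp (-(M * t)) * Real.exp (-(M * (T - t))) := by
    rw [← Real.exp_add]; ring_nf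
  have h2 : 1 - M * (T - t) ≤ Real.exp (-(M * (T - t))) := by
    have := Real.add_one_le_exp (-(M * (T - t))); linarith
  have h3 : Real.exp (-(M * t)) ≤ 1 := Real.exp_le_one_iff.mpr (by nlinarith)
  have h4 : (0:ℝ) < Real.exp (-(M * t)) := Real.exp_pos _
  have h5 : Real.exp (-(M*t)) * (1 - M * (T - t)) ≤ Real.exp (-(M * T)) := by
    rw [h1]; exact mul_le_mul_of_nonneg_left h2 h4.le
  nlinarith [mul_le_mul_of_nonneg_right h3 (by nlinarith : (0:ℝ) ≤ M * (T - t))]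


lemma CTD_nonneg_aux {M T : ℝ} (hM : 0 < M) (hT : 0 ≤ T) :
    0 ≤ M * T - 1 + Real.exp (-(M * T)) := by
  have := Real.add_one_le_exp (-(M * T)); linarith


lemma CTD_integral_mul_exp {M : ℝ} (hM : M ≠ 0) (t : ℝ) :
    ∫ s in (0:ℝ)..t, s * Real.exp (M * s)
      = ((M * t - 1) * Real.exp (M * t) + 1) / M ^ 2 := by
  have hder : ∀ s : ℝ, HasDerivAt (fun s => (M * s - 1) * Real.exp (M * s) / M ^ 2)
      (s * Real.exp (M * s)) s := by
    intro s
    have h1 : HasDerivAt (fun s : ℝ => M * s - 1) M s := by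
      simpa using ((hasDerivAt_id s).const_mul M).sub_const 1
    have h2 : HasDerivAt (fun s : ℝ => Real.exp (M * s)) (Real.exp (M * s) * M) s :=
      (Real.hasDerivAt_exp (M * s)).comp s (by simpa using (hasDerivAt_id s).const_mul M)
    have h3 := (h1.mul h2).div_const (M ^ 2)
    have h4 : s * Real.exp (M * s) = (M * Real.exp (M * s) + (M * s - 1) * (Real.exp (M * s) * M)) / M ^ 2 := by
      rw [eq_div_iff (pow_ne_zero 2 hM)]
      ring
    rw [h4]; exact h3
  rw [intervalIntegral.integral_eq_sub_of_hasDerivAt (fun s _ => hder s)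
    (Continuous.intervalIntegrable (by fun_prop) _ _)]
  simp
  ring


/-- proof of Proposition 5: joint modulus of continuity of
`(t, F) ↦ z_F(t)`. If `Λ := 2·G·Lip(V)·(M·Tmax − 1 + e^{−M·Tmax})/M² < 1` and
`V ≤ Vmax`, then for the characteristic travel distances `z_F, z_{F′}` of
`F, F′ ∈ 𝒫_{m,G}` and all `t, t′ ∈ 𝒯`,
`|z_F(t) − z_{F′}(t′)| ≤ e^{M·Tmax}·(Lip(V)/(1 − Λ))·∫₀^{Tmax} |F(S_s(z_F)) − F′(S_s(z_F))| ds
  + Vmax·|t − t′|`. -/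
theorem characteristic_travel_distance_joint_modulus
    (Tmax Xmin Xmax G : ℝ) (hT : 0 < Tmax) (hXmin : 0 < Xmin) (hXX : Xmin < Xmax)
    (hG : 0 < G)
    (Td Ta : Set ℝ) (hTdc : IsCompact Td) (hTd : Td ⊆ Set.Icc 0 Tmax)
    (hTac : IsCompact Ta) (hTa : Ta ⊆ Set.Icc 0 Tmax)
    (m : Measure (ℝ × ℝ)) (hm : IsProbabilityMeasure m)
    (V : ℝ → ℝ) (LV : NNReal) (hV : LipschitzOnWith LV V (Set.Ici 0))
    (hVpos : ∀ c : ℝ, 0 ≤ c → 0 < V c)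
    (Vmax : ℝ) (hVmax : ∀ c : ℝ, 0 ≤ c → V c ≤ Vmax)
    (M : ℝ) (hM : 0 < M)
    (hΛ : 2 * G * (LV : ℝ) * (M * Tmax - 1 + Real.exp (-(M * Tmax))) / M ^ 2 < 1)
    (F F' : Measure (ℝ × ℝ))
    (hF : memP Td (Set.Icc Xmin Xmax) Ta m G F)
    (hF' : memP Td (Set.Icc Xmin Xmax) Ta m G F')
    (zF zF' : ℝ → ℝ) (hzF : Continuous zF) (hzF' : Continuous zF')
    (hfix : ∀ t ∈ Set.Icc (0:ℝ) Tmax, zF t = Umap Td (Set.Icc Xmin Xmax) V F zF t)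
    (hfix' : ∀ t ∈ Set.Icc (0:ℝ) Tmax, zF' t = Umap Td (Set.Icc Xmin Xmax) V F' zF' t) :
    ∀ t ∈ Set.Icc (0:ℝ) Tmax, ∀ t' ∈ Set.Icc (0:ℝ) Tmax,
      |zF t - zF' t'|
        ≤ Real.exp (M * Tmax)
            * ((LV : ℝ) /
                (1 - 2 * G * (LV : ℝ) * (M * Tmax - 1 + Real.exp (-(M * Tmax))) / M ^ 2))
            * (∫ s in (0:ℝ)..Tmax,
                |(F (Sset Td (Set.Icc Xmin Xmax) zF s)).toReal
                  - (F' (Sset Td (Set.Icc Xmin Xmax) zF s)).toReal|)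
          + Vmax * |t - t'| := by
  intro t ht t' ht'
  obtain ⟨hFp, hFsupp, hFle, hFmarg⟩ := hF
  obtain ⟨hF'p, hF'supp, hF'le, hF'marg⟩ := hF'
  haveI := hFp
  haveI := hF'p
  have hG0 : (0:ℝ) ≤ G := hG.le
  have hXlu : Xmin ≤ Xmax := hXX.le
  have hLV0 : (0:ℝ) ≤ (LV:ℝ) := LV.coe_nonneg
  set Xs := Set.Icc Xmin Xmax with hXs
  set a : ℝ → ℝ := fun s => (F (Sset Td Xs zF s)).toReal with hadef
  set b : ℝ → ℝ := fun s => (F' (Sset Td Xs zF s)).toReal with hbdef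
  set c : ℝ → ℝ := fun s => (F' (Sset Td Xs zF' s)).toReal with hcdef
  have hacont : ContinuousOn a (Set.Icc 0 Tmax) := CTD_cont (Td := Td) hXlu hzF hG0 hFle hT
  have hbcont : ContinuousOn b (Set.Icc 0 Tmax) := CTD_cont (Td := Td) hXlu hzF hG0 hF'le hT
  have hccont : ContinuousOn c (Set.Icc 0 Tmax) := CTD_cont (Td := Td) hXlu hzF' hG0 hF'le hT
  have hVcont : ContinuousOn V (Set.Ici 0) := hV.continuousOn
  have hVlip : ∀ x y : ℝ, 0 ≤ x → 0 ≤ y → |V x - V y| ≤ (LV:ℝ) * |x - y| := by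
    intro x y hx hy
    have := hV.dist_le_mul x hx y hy
    rwa [Real.dist_eq, Real.dist_eq] at this
  set u : ℝ → ℝ := fun s => zF s - zF' s with hudef
  have hucont : Continuous u := hzF.sub hzF'
  set I := ∫ s in (0:ℝ)..Tmax, |a s - b s| with hIdef
  have h0T : (0:ℝ) ∈ Set.Icc (0:ℝ) Tmax := ⟨le_rfl, hT.le⟩
  have hIint : IntervalIntegrable (fun s => |a s - b s|) volume 0 Tmax := by
    apply ContinuousOn.intervalIntegrable
    rw [Set.uIcc_of_le hT.le]
    exact (hacont.sub hbcont).abs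
  have hI0 : 0 ≤ I := intervalIntegral.integral_nonneg hT.le fun s _ => abs_nonneg _
  set D := dM M Tmax zF zF' with hDdef
  have hDeq : D = ⨆ τ : Set.Icc (0:ℝ) Tmax, Real.exp (-(M * τ.1)) * |zF τ.1 - zF' τ.1| := hDdef
  have hq : Continuous fun s => Real.exp (-(M * s)) * |zF s - zF' s| := by fun_prop
  have hbdd : BddAbove (Set.range fun τ : Set.Icc (0:ℝ) Tmax =>
      Real.exp (-(M * τ.1)) * |zF τ.1 - zF' τ.1|) := by
    rw [← Set.image_eq_range (fun s => Real.exp (-(M * s)) * |zF s - zF' s|) (Set.Icc 0 Tmax)]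
    exact (isCompact_Icc.image_of_continuousOn hq.continuousOn).bddAbove
  have hDge : ∀ τ ∈ Set.Icc (0:ℝ) Tmax, Real.exp (-(M * τ)) * |zF τ - zF' τ| ≤ D := by
    intro τ hτ
    rw [hDeq]
    exact le_ciSup hbdd ⟨τ, hτ⟩
  have hD0 : 0 ≤ D := le_trans (by positivity) (hDge 0 h0T)
  have hDle : ∀ τ ∈ Set.Icc (0:ℝ) Tmax, |zF τ - zF' τ| ≤ D * Real.exp (M * τ) := by
    intro τ hτ
    have h1 := hDge τ hτ
    have h2 : Real.exp (M * τ) * Real.exp (-(M * τ)) = 1 := by rw [← Real.exp_add]; simp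
    have h3 := mul_le_mul_of_nonneg_left h1 (Real.exp_pos (M * τ)).le
    have h4 : Real.exp (M * τ) * (Real.exp (-(M * τ)) * |zF τ - zF' τ|) = |zF τ - zF' τ| := by
      rw [← mul_assoc, h2, one_mul]
    rw [mul_comm D]
    linarith [h3, h4]
  have hVint : ∀ w : ℝ → ℝ, ContinuousOn w (Set.Icc 0 Tmax) → (∀ s, 0 ≤ w s) →
      ∀ t1 ∈ Set.Icc (0:ℝ) Tmax, ∀ t2 ∈ Set.Icc (0:ℝ) Tmax,
      IntervalIntegrable (fun s => V (w s)) volume t1 t2 := by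
    intro w hw hw0 t1 ht1 t2 ht2
    apply ContinuousOn.intervalIntegrable
    exact hVcont.comp (hw.mono (Set.uIcc_subset_Icc ht1 ht2)) fun s _ => hw0 s
  have hapos : ∀ s, (0:ℝ) ≤ a s := fun s => ENNReal.toReal_nonneg
  have hbpos : ∀ s, (0:ℝ) ≤ b s := fun s => ENNReal.toReal_nonneg
  have hcpos : ∀ s, (0:ℝ) ≤ c s := fun s => ENNReal.toReal_nonneg
  -- main Gronwall-type estimate
  have hmain : ∀ t1 ∈ Set.Icc (0:ℝ) Tmax, Real.exp (-(M * t1)) * |zF t1 - zF' t1|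
      ≤ (LV:ℝ) * I
        + (2 * G * (LV:ℝ) * (M * Tmax - 1 + Real.exp (-(M * Tmax))) / M ^ 2) * D := by
    intro t1 ht1
    have h0t : (0:ℝ) ≤ t1 := ht1.1
    have hsubI : Set.uIcc (0:ℝ) t1 ⊆ Set.Icc 0 Tmax := Set.uIcc_subset_Icc h0T ht1
    have hfint : IntervalIntegrable (fun s => V (a s)) volume 0 t1 :=
      hVint a hacont hapos 0 h0T t1 ht1
    have hgint : IntervalIntegrable (fun s => V (c s)) volume 0 t1 :=
      hVint c hccont hcpos 0 h0T t1 ht1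
    have hint_ab : IntervalIntegrable (fun s => |a s - b s|) volume 0 t1 :=
      ContinuousOn.intervalIntegrable (((hacont.sub hbcont).abs).mono hsubI)
    have hint_bc : IntervalIntegrable (fun s => |b s - c s|) volume 0 t1 :=
      ContinuousOn.intervalIntegrable (((hbcont.sub hccont).abs).mono hsubI)
    have hut : zF t1 - zF' t1 = ∫ s in (0:ℝ)..t1, (V (a s) - V (c s)) := by
      rw [hfix t1 ht1, hfix' t1 ht1, intervalIntegral.integral_sub hfint hgint]
      rfl
    have habs : |zF t1 - zF' t1| ≤ ∫ s in (0:ℝ)..t1, |V (a s) - V (c s)| := by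
      rw [hut]
      exact intervalIntegral.abs_integral_le_integral_abs h0t
    have hpt : ∀ s ∈ Set.Icc (0:ℝ) t1,
        |V (a s) - V (c s)| ≤ (LV:ℝ) * |a s - b s| + (LV:ℝ) * |b s - c s| := by
      intro s hs
      calc |V (a s) - V (c s)| ≤ |V (a s) - V (b s)| + |V (b s) - V (c s)| :=
            abs_sub_le _ _ _
        _ ≤ (LV:ℝ) * |a s - b s| + (LV:ℝ) * |b s - c s| :=
            add_le_add (hVlip _ _ (hapos s) (hbpos s)) (hVlip _ _ (hbpos s) (hcpos s))
    have hstep1 : ∫ s in (0:ℝ)..t1, |V (a s) - V (c s)|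
        ≤ (LV:ℝ) * (∫ s in (0:ℝ)..t1, |a s - b s|) + (LV:ℝ) * ∫ s in (0:ℝ)..t1, |b s - c s| := by
      have h1 := intervalIntegral.integral_mono_on h0t ((hfint.sub hgint).abs)
        ((hint_ab.const_mul ((LV:ℝ))).add (hint_bc.const_mul ((LV:ℝ)))) hpt
      rwa [intervalIntegral.integral_add (hint_ab.const_mul _) (hint_bc.const_mul _),
        intervalIntegral.integral_const_mul, intervalIntegral.integral_const_mul] at h1
    have hstep2 : ∫ s in (0:ℝ)..t1, |a s - b s| ≤ I :=
      intervalIntegral.integral_mono_interval le_rfl h0t ht1.2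
        (Filter.Eventually.of_forall fun s => abs_nonneg _) hIint
    -- pointwise bound on |b - c|
    have hbc : ∀ s ∈ Set.Icc (0:ℝ) t1, |b s - c s| ≤ 2*G*D*(s * Real.exp (M*s)) := by
      intro s hs
      have hsT : s ∈ Set.Icc (0:ℝ) Tmax := ⟨hs.1, le_trans hs.2 ht1.2⟩
      have h1 := CTD_key1 (Td := Td) (Xl := Xmin) (Xu := Xmax) hzF hzF' hG0 hF'le hs.1
      have h2 : ∫ τ in (0:ℝ)..s, |(zF s - zF τ) - (zF' s - zF' τ)|
          ≤ ∫ τ in (0:ℝ)..s, 2*D*Real.exp (M*s) := by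
        apply intervalIntegral.integral_mono_on hs.1
        · exact ContinuousOn.intervalIntegrable (Continuous.continuousOn (by fun_prop))
        · exact intervalIntegrable_const
        · intro τ hτ
          have hτT : τ ∈ Set.Icc (0:ℝ) Tmax := ⟨hτ.1, le_trans hτ.2 (le_trans hs.2 ht1.2)⟩
          have e1 := hDle s hsT
          have e2 := hDle τ hτT
          have e3 : Real.exp (M*τ) ≤ Real.exp (M*s) :=
            Real.exp_le_exp.mpr (mul_le_mul_of_nonneg_left hτ.2 hM.le)
          have e4 : |(zF s - zF τ) - (zF' s - zF' τ)| ≤ |zF s - zF' s| + |zF τ - zF' τ| := by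
            have heq : (zF s - zF τ) - (zF' s - zF' τ) = (zF s - zF' s) + -(zF τ - zF' τ) := by
              ring
            rw [heq]
            exact le_trans (abs_add_le _ _) (by rw [abs_neg])
          nlinarith [e1, e2, e3, e4, hD0]
      rw [intervalIntegral.integral_const, smul_eq_mul, sub_zero] at h2
      calc |b s - c s| ≤ G * ∫ τ in (0:ℝ)..s, |(zF s - zF τ) - (zF' s - zF' τ)| := h1
        _ ≤ G * (s * (2*D*Real.exp (M*s))) := mul_le_mul_of_nonneg_left h2 hG0
        _ = 2*G*D*(s * Real.exp (M*s)) := by ring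
    have hstep3 : ∫ s in (0:ℝ)..t1, |b s - c s|
        ≤ 2*G*D*(((M*t1-1)*Real.exp (M*t1)+1)/M^2) := by
      have h4 : ∫ s in (0:ℝ)..t1, |b s - c s| ≤ ∫ s in (0:ℝ)..t1, 2*G*D*(s * Real.exp (M*s)) :=
        intervalIntegral.integral_mono_on h0t hint_bc
          (Continuous.intervalIntegrable (by fun_prop) _ _) hbc
      rwa [intervalIntegral.integral_const_mul, CTD_integral_mul_exp (ne_of_gt hM)] at h4
    -- combine
    have hF1 : |zF t1 - zF' t1|
        ≤ (LV:ℝ) * I + 2*(LV:ℝ)*G*D*(((M*t1-1)*Real.exp (M*t1)+1)/M^2) := by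
      have := le_trans habs hstep1
      have h5 : (LV:ℝ) * (∫ s in (0:ℝ)..t1, |a s - b s|) ≤ (LV:ℝ) * I :=
        mul_le_mul_of_nonneg_left hstep2 hLV0
      have h6 : (LV:ℝ) * (∫ s in (0:ℝ)..t1, |b s - c s|)
          ≤ (LV:ℝ) * (2*G*D*(((M*t1-1)*Real.exp (M*t1)+1)/M^2)) :=
        mul_le_mul_of_nonneg_left hstep3 hLV0
      nlinarith [this, h5, h6]
    have hexp1 : Real.exp (M*t1) * Real.exp (-(M*t1)) = 1 := by rw [← Real.exp_add]; simp
    have hexp2 : Real.exp (-(M*t1)) ≤ 1 :=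
      Real.exp_le_one_iff.mpr (by nlinarith)
    have hmono := CTD_exp_mono hM h0t ht1.2
    have hA : Real.exp (-(M*t1)) * |zF t1 - zF' t1|
        ≤ Real.exp (-(M*t1)) * ((LV:ℝ) * I + 2*(LV:ℝ)*G*D*(((M*t1-1)*Real.exp (M*t1)+1)/M^2)) :=
      mul_le_mul_of_nonneg_left hF1 (Real.exp_pos _).le
    have hB : Real.exp (-(M*t1)) * ((LV:ℝ) * I + 2*(LV:ℝ)*G*D*(((M*t1-1)*Real.exp (M*t1)+1)/M^2))
        = (LV:ℝ) * I * Real.exp (-(M*t1))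
          + 2*(LV:ℝ)*G*D*((M*t1-1) + Real.exp (-(M*t1)))/M^2 := by
      linear_combination (2*(LV:ℝ)*G*D*(M*t1-1)/M^2) * hexp1
    have hC1 : (LV:ℝ) * I * Real.exp (-(M*t1)) ≤ (LV:ℝ) * I :=
      mul_le_of_le_one_right (mul_nonneg hLV0 hI0) hexp2
    have hC2 : 2*(LV:ℝ)*G*D*((M*t1-1) + Real.exp (-(M*t1)))/M^2
        ≤ 2*(LV:ℝ)*G*D*(M*Tmax - 1 + Real.exp (-(M*Tmax)))/M^2 := by
      have hcoef : (0:ℝ) ≤ 2*(LV:ℝ)*G*D :=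
        mul_nonneg (mul_nonneg (mul_nonneg (by norm_num) hLV0) hG0) hD0
      have hnum : 2*(LV:ℝ)*G*D*((M*t1-1) + Real.exp (-(M*t1)))
          ≤ 2*(LV:ℝ)*G*D*(M*Tmax - 1 + Real.exp (-(M*Tmax))) := by
        apply mul_le_mul_of_nonneg_left _ hcoef
        linarith [hmono]
      exact div_le_div_of_nonneg_right hnum (sq_nonneg M)
    have hC3 : 2*(LV:ℝ)*G*D*(M*Tmax - 1 + Real.exp (-(M*Tmax)))/M^2
        = (2 * G * (LV:ℝ) * (M * Tmax - 1 + Real.exp (-(M * Tmax))) / M ^ 2) * D := by ring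
    rw [hB] at hA
    linarith [hA, hC1, hC2, hC3]
  -- solve for D
  have hXT0 : 0 ≤ M * Tmax - 1 + Real.exp (-(M * Tmax)) := CTD_nonneg_aux hM hT.le
  have hΛ0 : 0 ≤ 2 * G * (LV:ℝ) * (M * Tmax - 1 + Real.exp (-(M * Tmax))) / M ^ 2 :=
    div_nonneg (mul_nonneg (mul_nonneg (by linarith) hLV0) hXT0) (sq_nonneg M)
  have h1Λ : 0 < 1 - 2 * G * (LV:ℝ) * (M * Tmax - 1 + Real.exp (-(M * Tmax))) / M ^ 2 := by
    linarith [hΛ]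
  have hDbound : D ≤ (LV:ℝ) * I
      + (2 * G * (LV:ℝ) * (M * Tmax - 1 + Real.exp (-(M * Tmax))) / M ^ 2) * D := by
    haveI : Nonempty (Set.Icc (0:ℝ) Tmax) := ⟨⟨0, h0T⟩⟩
    rw [hDeq]
    exact ciSup_le fun p => hmain p.1 p.2
  have hDfinal : D ≤ (LV:ℝ) * I
      / (1 - 2 * G * (LV:ℝ) * (M * Tmax - 1 + Real.exp (-(M * Tmax))) / M ^ 2) := by
    rw [le_div_iff₀ h1Λ]
    nlinarith [hDbound]
  have hfirst : |zF t - zF' t| ≤ Real.exp (M * Tmax)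
      * ((LV:ℝ) / (1 - 2 * G * (LV:ℝ) * (M * Tmax - 1 + Real.exp (-(M * Tmax))) / M ^ 2)) * I := by
    have h1 := hDle t ht
    have h2 : Real.exp (M * t) ≤ Real.exp (M * Tmax) :=
      Real.exp_le_exp.mpr (mul_le_mul_of_nonneg_left ht.2 hM.le)
    have h3 : 0 ≤ (LV:ℝ) * I
        / (1 - 2 * G * (LV:ℝ) * (M * Tmax - 1 + Real.exp (-(M * Tmax))) / M ^ 2) :=
      div_nonneg (mul_nonneg hLV0 hI0) h1Λ.le
    calc |zF t - zF' t| ≤ D * Real.exp (M * t) := h1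
      _ ≤ ((LV:ℝ) * I / (1 - 2 * G * (LV:ℝ) * (M * Tmax - 1 + Real.exp (-(M * Tmax))) / M ^ 2))
            * Real.exp (M * Tmax) := mul_le_mul hDfinal h2 (Real.exp_pos _).le h3
      _ = Real.exp (M * Tmax)
            * ((LV:ℝ) / (1 - 2 * G * (LV:ℝ) * (M * Tmax - 1 + Real.exp (-(M * Tmax))) / M ^ 2))
            * I := by ring
  have hsecond : |zF' t - zF' t'| ≤ Vmax * |t - t'| := by
    have hint1 : IntervalIntegrable (fun s => V (c s)) volume 0 t :=
      hVint c hccont hcpos 0 h0T t ht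
    have hint2 : IntervalIntegrable (fun s => V (c s)) volume 0 t' :=
      hVint c hccont hcpos 0 h0T t' ht'
    have heq : zF' t - zF' t' = ∫ s in t'..t, V (c s) := by
      rw [hfix' t ht, hfix' t' ht']
      exact intervalIntegral.integral_interval_sub_left hint1 hint2
    rw [heq]
    have hb2 : ∀ x ∈ Set.uIoc t' t, ‖V (c x)‖ ≤ Vmax := by
      intro x hx
      have hx0 : (0:ℝ) ≤ c x := hcpos x
      rw [Real.norm_eq_abs, abs_of_pos (hVpos _ hx0)]
      exact hVmax _ hx0
    have := intervalIntegral.norm_integral_le_of_norm_le_const hb2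
    rwa [Real.norm_eq_abs] at this
  have htri : |zF t - zF' t'| ≤ |zF t - zF' t| + |zF' t - zF' t'| := by
    have heq2 : zF t - zF' t' = (zF t - zF' t) + (zF' t - zF' t') := by ring
    rw [heq2]
    exact abs_add_le _ _
  have hfinal := le_trans htri (add_le_add hfirst hsecond)
  simpa only [hIdef, hadef, hbdef] using hfinal
end
end

section
/- Fix M > 0 such that Λ := 2·G·Lip(V)·(M·T_max − 1 + e^{−M·T_max})/M² < 1, and suppose 0 < V_min ≤ V(c) ≤ V_max for all c ≥ 0. For F, F′ ∈ 𝒫_{m,G}, let z_F, z_{F′} denote the respective characteristic travel distances, which are invertible, and let x, x′ lie in the ranges of z_F and z_{F′}, respectively. Then |z_F^{−1}(x) − z_{F′}^{−1}(x′)| ≤ |x − x′|/V_min + e^{M·T_max}·Lip(V)/((1 − Λ)·V_min)·∫₀^{T_max} |F(S_s(z_F)) − F′(S_s(z_F))| ds. -/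
open MeasureTheory Set Filter

noncomputable section

section aux

lemma intervalIntegrable_of_bounded' {f : ℝ → ℝ} (hf : Measurable f) {C a b : ℝ}
    (hC : ∀ s, |f s| ≤ C) : IntervalIntegrable f volume a b := by
  rw [intervalIntegrable_iff]
  haveI : IsFiniteMeasure (volume.restrict (Set.uIoc a b)) :=
    ⟨by rw [Measure.restrict_apply_univ]; exact measure_Ioc_lt_top⟩
  refine ⟨hf.aestronglyMeasurable, ?_⟩
  apply MeasureTheory.HasFiniteIntegral.of_bounded (C := C)
  exact Filter.Eventually.of_forall fun s => by simpa using hC s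

lemma exp_key1 {u : ℝ} (hu : 0 ≤ u) :
    u * (Real.exp u - 1) ≤ 2 * (u * Real.exp u - Real.exp u + 1) := by
  set f : ℝ → ℝ := fun v => v * Real.exp v - 2 * Real.exp v + v + 2 with hf
  have hderiv : ∀ v ∈ Set.uIcc 0 u, HasDerivAt f (1 + (v - 1) * Real.exp v) v := by
    intro v _
    have h1 : HasDerivAt (fun v : ℝ => v * Real.exp v) (Real.exp v + v * Real.exp v) v := by
      refine ((hasDerivAt_id' v).mul (Real.hasDerivAt_exp v)).congr_deriv ?_; ring
    have h2 : HasDerivAt (fun v : ℝ => 2 * Real.exp v) (2 * Real.exp v) v :=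
      (Real.hasDerivAt_exp v).const_mul 2
    have := ((h1.sub h2).add (hasDerivAt_id v)).add_const 2
    refine this.congr_deriv ?_
    ring
  have hint : IntervalIntegrable (fun v => 1 + (v - 1) * Real.exp v) volume 0 u :=
    (Continuous.intervalIntegrable (by fun_prop)) _ _
  have hFTC := intervalIntegral.integral_eq_sub_of_hasDerivAt hderiv hint
  have hnn : 0 ≤ ∫ v in (0:ℝ)..u, (1 + (v - 1) * Real.exp v) := by
    apply intervalIntegral.integral_nonneg hu
    intro v hv
    have hv0 : 0 ≤ v := hv.1
    rcases le_or_gt 1 v with h | h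
    · have : 0 ≤ (v - 1) * Real.exp v := mul_nonneg (by linarith) (Real.exp_pos v).le
      linarith
    · have hev : Real.exp v * Real.exp (-v) = 1 := by rw [← Real.exp_add]; simp
      have h1v : 1 - v ≤ Real.exp (-v) := by
        have := Real.add_one_le_exp (-v); linarith
      have : (1 - v) * Real.exp v ≤ 1 := by
        calc (1 - v) * Real.exp v ≤ Real.exp (-v) * Real.exp v :=
              mul_le_mul_of_nonneg_right h1v (Real.exp_pos v).le
          _ = 1 := by rw [mul_comm]; exact hev
      nlinarith
  rw [hFTC] at hnn
  simp only [hf, Real.exp_zero] at hnn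
  nlinarith [Real.exp_pos u]

lemma exp_mono_key {u u0 : ℝ} (hu : 0 ≤ u) (huu : u ≤ u0) :
    u - 1 + Real.exp (-u) ≤ u0 - 1 + Real.exp (-u0) := by
  have h1 : Real.exp (-u) - Real.exp (-u0) ≤ u0 - u := by
    have := Real.add_one_le_exp (-(u0 - u))
    have he : Real.exp (-u0) = Real.exp (-u) * Real.exp (-(u0 - u)) := by
      rw [← Real.exp_add]; ring_nf
    have hle : Real.exp (-u) ≤ 1 := Real.exp_le_one_iff.mpr (by linarith)
    nlinarith [Real.exp_pos (-u), Real.exp_pos (-(u0-u))]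
  linarith

lemma exp_key2 {u u0 : ℝ} (hu : 0 ≤ u) (huu : u ≤ u0) :
    u * (1 - Real.exp (-u)) ≤ 2 * (u0 - 1 + Real.exp (-u0)) := by
  have h1 := exp_key1 hu
  have h2 := exp_mono_key hu huu
  have he : Real.exp u * Real.exp (-u) = 1 := by
    rw [← Real.exp_add]; simp
  have hp := Real.exp_pos (-u)
  have h3 : u * (1 - Real.exp (-u)) ≤ 2 * (u - 1 + Real.exp (-u)) := by
    have h4 := mul_le_mul_of_nonneg_right h1 hp.le
    nlinarith [he, mul_le_mul_of_nonneg_left he.le hu]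
  linarith

lemma Sset_measurableSet {Td Xs : Set ℝ} (hTd : MeasurableSet Td) (hXs : MeasurableSet Xs)
    {z : ℝ → ℝ} (hz : Continuous z) (s : ℝ) : MeasurableSet (Sset Td Xs z s) := by
  have h1 : MeasurableSet {p : ℝ × ℝ | z s - z p.1 < p.2} :=
    measurableSet_lt (((hz.comp continuous_fst).measurable).const_sub _) measurable_snd
  have : Sset Td Xs z s =
      ((Set.Icc 0 s ∩ Td) ×ˢ Xs) ∩ {p : ℝ × ℝ | z s - z p.1 < p.2} := by
    ext p; simp only [Sset, Set.mem_setOf_eq, Set.mem_inter_iff, Set.mem_prod, Set.mem_Ioi]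
    tauto
  rw [this]
  exact ((measurableSet_Icc.inter hTd).prod hXs).inter h1

lemma measurable_F_Sset {Td Xs : Set ℝ} (hTd : MeasurableSet Td) (hXs : MeasurableSet Xs)
    {z : ℝ → ℝ} (hz : Continuous z) (F : Measure (ℝ × ℝ)) [SFinite F] :
    Measurable fun s => F (Sset Td Xs z s) := by
  have hT : MeasurableSet {q : ℝ × (ℝ × ℝ) |
      q.2.1 ∈ Set.Icc 0 q.1 ∩ Td ∧ q.2.2 ∈ Set.Ioi (z q.1 - z q.2.1) ∩ Xs} := by
    have h1 : MeasurableSet {q : ℝ × (ℝ × ℝ) | 0 ≤ q.2.1} :=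
      measurableSet_le measurable_const measurable_snd.fst
    have h2 : MeasurableSet {q : ℝ × (ℝ × ℝ) | q.2.1 ≤ q.1} :=
      measurableSet_le measurable_snd.fst measurable_fst
    have h3 : MeasurableSet {q : ℝ × (ℝ × ℝ) | q.2.1 ∈ Td} := measurable_snd.fst hTd
    have h4 : MeasurableSet {q : ℝ × (ℝ × ℝ) | z q.1 - z q.2.1 < q.2.2} :=
      measurableSet_lt (((hz.measurable.comp measurable_fst)).sub
        (hz.measurable.comp measurable_snd.fst)) measurable_snd.snd
    have h5 : MeasurableSet {q : ℝ × (ℝ × ℝ) | q.2.2 ∈ Xs} := measurable_snd.snd hXs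
    have : {q : ℝ × (ℝ × ℝ) |
        q.2.1 ∈ Set.Icc 0 q.1 ∩ Td ∧ q.2.2 ∈ Set.Ioi (z q.1 - z q.2.1) ∩ Xs}
        = ({q : ℝ × (ℝ × ℝ) | 0 ≤ q.2.1} ∩ {q | q.2.1 ≤ q.1} ∩ {q | q.2.1 ∈ Td})
          ∩ ({q | z q.1 - z q.2.1 < q.2.2} ∩ {q | q.2.2 ∈ Xs}) := by
      ext q
      simp only [Set.mem_setOf_eq, Set.mem_inter_iff, Set.mem_Icc, Set.mem_Ioi]
    rw [this]; exact ((h1.inter h2).inter h3).inter (h4.inter h5)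
  have := measurable_measure_prodMk_left (ν := F) hT
  convert this using 2
  rfl

lemma Sset_toReal_diff_bound {Td Xs : Set ℝ} (hTd : MeasurableSet Td) (hXs : MeasurableSet Xs)
    {z z' : ℝ → ℝ} (hz : Continuous z) (hz' : Continuous z')
    (F : Measure (ℝ × ℝ)) [IsFiniteMeasure F] {G : ℝ} (hG : 0 ≤ G)
    (hb : ∀ B : Set (ℝ × ℝ), MeasurableSet B → F B ≤ ENNReal.ofReal G * volume B)
    {s : ℝ} (hs : 0 ≤ s) :
    (F (Sset Td Xs z s)).toReal ≤ (F (Sset Td Xs z' s)).toReal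
      + G * ∫ τ in (0:ℝ)..s, (|z s - z' s| + |z τ - z' τ|) := by
  set hfun : ℝ → ℝ := fun τ => |z s - z' s| + |z τ - z' τ| with hfun_def
  have hfun_cont : Continuous hfun := by fun_prop
  have hfun_nn : ∀ τ, 0 ≤ hfun τ := fun τ => add_nonneg (abs_nonneg _) (abs_nonneg _)
  set A := Sset Td Xs z s
  set B := Sset Td Xs z' s
  have hA : MeasurableSet A := Sset_measurableSet hTd hXs hz s
  have hB : MeasurableSet B := Sset_measurableSet hTd hXs hz' s
  set E : Set (ℝ × ℝ) :=
    {p : ℝ × ℝ | p.1 ∈ Set.Icc 0 s ∧ p.2 ∈ Set.Ioc (z s - z p.1) (z s - z p.1 + hfun p.1)}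
    with hE_def
  have hE : MeasurableSet E := by
    have h1 : MeasurableSet {p : ℝ × ℝ | z s - z p.1 < p.2} :=
      measurableSet_lt (((hz.comp continuous_fst).measurable).const_sub _) measurable_snd
    have hm2 : Measurable fun p : ℝ × ℝ => z s - z p.1 + hfun p.1 :=
      (((hz.comp continuous_fst).measurable).const_sub _).add
        ((hfun_cont.comp continuous_fst).measurable)
    have h2 : MeasurableSet {p : ℝ × ℝ | p.2 ≤ z s - z p.1 + hfun p.1} :=
      measurableSet_le measurable_snd hm2
    have h3 : MeasurableSet {p : ℝ × ℝ | p.1 ∈ Set.Icc 0 s} :=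
      measurable_fst measurableSet_Icc
    have : E = {p : ℝ × ℝ | p.1 ∈ Set.Icc 0 s} ∩
        ({p : ℝ × ℝ | z s - z p.1 < p.2} ∩ {p : ℝ × ℝ | p.2 ≤ z s - z p.1 + hfun p.1}) := by
      ext p; simp only [hE_def, Set.mem_setOf_eq, Set.mem_inter_iff, Set.mem_Ioc]
    rw [this]; exact h3.inter (h1.inter h2)
  have hsub : A \ B ⊆ E := by
    rintro p ⟨hpA, hpB⟩
    obtain ⟨⟨hp1, hp2⟩, hp3, hp4⟩ := hpA
    have hple : p.2 ≤ z' s - z' p.1 := by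
      by_contra hc
      push_neg at hc
      exact hpB ⟨⟨hp1, hp2⟩, hc, hp4⟩
    refine ⟨hp1, hp3, ?_⟩
    have h1 : z' s - z' p.1 ≤ z s - z p.1 + hfun p.1 := by
      simp only [hfun_def]
      nlinarith [le_abs_self (z p.1 - z' p.1), le_abs_self (z s - z' s),
        neg_abs_le (z s - z' s), neg_abs_le (z p.1 - z' p.1)]
    linarith [hple, h1]
  have hslice : ∀ τ : ℝ, volume (Prod.mk τ ⁻¹' E)
      = Set.indicator (Set.Icc 0 s) (fun τ => ENNReal.ofReal (hfun τ)) τ := by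
    intro τ
    by_cases hτ : τ ∈ Set.Icc (0:ℝ) s
    · have : Prod.mk τ ⁻¹' E = Set.Ioc (z s - z τ) (z s - z τ + hfun τ) := by
        ext ξ
        simp only [hE_def, Set.mem_preimage, Set.mem_setOf_eq, Set.mem_Ioc]
        exact ⟨fun h => h.2, fun h => ⟨hτ, h⟩⟩
      rw [this, Real.volume_Ioc, Set.indicator_of_mem hτ]
      congr 1; ring
    · have : Prod.mk τ ⁻¹' E = ∅ := by
        ext ξ
        simp only [hE_def, Set.mem_preimage, Set.mem_setOf_eq, Set.mem_empty_iff_false, iff_false]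
        exact fun h => hτ h.1
      rw [this, Set.indicator_of_notMem hτ]; simp
  have hvolE : volume E ≤ ENNReal.ofReal (∫ τ in (0:ℝ)..s, hfun τ) := by
    rw [Measure.volume_eq_prod, Measure.prod_apply hE]
    have : ∫⁻ τ, volume (Prod.mk τ ⁻¹' E) = ∫⁻ τ in Set.Icc (0:ℝ) s, ENNReal.ofReal (hfun τ) := by
      simp_rw [hslice]
      exact lintegral_indicator measurableSet_Icc _
    rw [this]
    have hint : IntegrableOn hfun (Set.Icc 0 s) volume :=
      hfun_cont.continuousOn.integrableOn_compact isCompact_Icc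
    rw [← MeasureTheory.ofReal_integral_eq_lintegral_ofReal hint
      (Filter.Eventually.of_forall hfun_nn)]
    rw [intervalIntegral.integral_of_le hs, ← MeasureTheory.integral_Icc_eq_integral_Ioc]
  have hF1 : F A ≤ F B + F (A \ B) := by
    calc F A ≤ F (B ∪ (A \ B)) := measure_mono (fun p hp => by
          by_cases h : p ∈ B
          · exact Or.inl h
          · exact Or.inr ⟨hp, h⟩)
      _ ≤ F B + F (A \ B) := measure_union_le _ _
  have hF2 : F (A \ B) ≤ ENNReal.ofReal (G * ∫ τ in (0:ℝ)..s, hfun τ) := by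
    calc F (A \ B) ≤ ENNReal.ofReal G * volume (A \ B) := hb _ (hA.diff hB)
      _ ≤ ENNReal.ofReal G * volume E :=
          mul_le_mul_right (measure_mono hsub) _
      _ ≤ ENNReal.ofReal G * ENNReal.ofReal (∫ τ in (0:ℝ)..s, hfun τ) :=
          mul_le_mul_right hvolE _
      _ = ENNReal.ofReal (G * ∫ τ in (0:ℝ)..s, hfun τ) := by
          rw [← ENNReal.ofReal_mul hG]
  have hint_nn : 0 ≤ ∫ τ in (0:ℝ)..s, hfun τ :=
    intervalIntegral.integral_nonneg hs (fun τ _ => hfun_nn τ)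
  have hfin : F B + F (A \ B) ≠ ⊤ :=
    (ENNReal.add_lt_top.mpr ⟨measure_lt_top _ _, measure_lt_top _ _⟩).ne
  calc (F A).toReal ≤ (F B + F (A \ B)).toReal := ENNReal.toReal_mono hfin hF1
    _ = (F B).toReal + (F (A \ B)).toReal :=
        ENNReal.toReal_add (measure_ne_top _ _) (measure_ne_top _ _)
    _ ≤ (F B).toReal + G * ∫ τ in (0:ℝ)..s, hfun τ := by
        gcongr
        calc (F (A \ B)).toReal ≤ (ENNReal.ofReal (G * ∫ τ in (0:ℝ)..s, hfun τ)).toReal :=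
              ENNReal.toReal_mono ENNReal.ofReal_ne_top hF2
          _ = G * ∫ τ in (0:ℝ)..s, hfun τ := ENNReal.toReal_ofReal (mul_nonneg hG hint_nn)

end aux

set_option maxHeartbeats 1000000 in
/-- proof of Proposition 5: joint modulus of continuity of
`(x, F) ↦ z_F⁻¹(x)`. Under `Λ < 1` and `0 < Vmin ≤ V ≤ Vmax`, if `x = z_F(t)` and
`x′ = z_{F′}(t′)` lie in the ranges of the characteristic travel distances (so that
`t = z_F⁻¹(x)` and `t′ = z_{F′}⁻¹(x′)`), then
`|z_F⁻¹(x) − z_{F′}⁻¹(x′)| ≤ |x − x′|/Vmin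
  + e^{M·Tmax}·Lip(V)/((1 − Λ)·Vmin)·∫₀^{Tmax} |F(S_s(z_F)) − F′(S_s(z_F))| ds`. -/
theorem characteristic_travel_distance_inverse_joint_modulus
    (Tmax Xmin Xmax G : ℝ) (hT : 0 < Tmax) (hXmin : 0 < Xmin) (hXX : Xmin < Xmax)
    (hG : 0 < G)
    (Td Ta : Set ℝ) (hTdc : IsCompact Td) (hTd : Td ⊆ Set.Icc 0 Tmax)
    (hTac : IsCompact Ta) (hTa : Ta ⊆ Set.Icc 0 Tmax)
    (m : Measure (ℝ × ℝ)) (hm : IsProbabilityMeasure m)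
    (V : ℝ → ℝ) (LV : NNReal) (hV : LipschitzOnWith LV V (Set.Ici 0))
    (Vmin Vmax : ℝ) (hVmin : 0 < Vmin)
    (hVbd : ∀ c : ℝ, 0 ≤ c → Vmin ≤ V c ∧ V c ≤ Vmax)
    (M : ℝ) (hM : 0 < M)
    (hΛ : 2 * G * (LV : ℝ) * (M * Tmax - 1 + Real.exp (-(M * Tmax))) / M ^ 2 < 1)
    (F F' : Measure (ℝ × ℝ))
    (hF : memP Td (Set.Icc Xmin Xmax) Ta m G F)
    (hF' : memP Td (Set.Icc Xmin Xmax) Ta m G F')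
    (zF zF' : ℝ → ℝ) (hzF : Continuous zF) (hzF' : Continuous zF')
    (hfix : ∀ t ∈ Set.Icc (0:ℝ) Tmax, zF t = Umap Td (Set.Icc Xmin Xmax) V F zF t)
    (hfix' : ∀ t ∈ Set.Icc (0:ℝ) Tmax, zF' t = Umap Td (Set.Icc Xmin Xmax) V F' zF' t)
    (x x' t t' : ℝ) (ht : t ∈ Set.Icc (0:ℝ) Tmax) (ht' : t' ∈ Set.Icc (0:ℝ) Tmax)
    (hx : zF t = x) (hx' : zF' t' = x') :
    |t - t'|
      ≤ |x - x'| / Vmin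
        + Real.exp (M * Tmax) * (LV : ℝ) /
            ((1 - 2 * G * (LV : ℝ) * (M * Tmax - 1 + Real.exp (-(M * Tmax))) / M ^ 2)
              * Vmin)
          * ∫ s in (0:ℝ)..Tmax,
              |(F (Sset Td (Set.Icc Xmin Xmax) zF s)).toReal
                - (F' (Sset Td (Set.Icc Xmin Xmax) zF s)).toReal| := by
  obtain ⟨hFprob, -, hFb, -⟩ := hF
  obtain ⟨hF'prob, -, hF'b, -⟩ := hF'
  haveI := hFprob
  haveI := hF'prob
  set lam : ℝ := 2 * G * (LV : ℝ) * (M * Tmax - 1 + Real.exp (-(M * Tmax))) / M ^ 2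
    with hlam_def
  have h1lam : 0 < 1 - lam := by linarith
  have hLVnn : (0:ℝ) ≤ LV := LV.coe_nonneg
  set X : Set ℝ := Set.Icc Xmin Xmax with hX_def
  have hXm : MeasurableSet X := measurableSet_Icc
  have hTdm : MeasurableSet Td := hTdc.measurableSet
  set g : ℝ → ℝ := fun s => (F (Sset Td X zF s)).toReal with hg_def
  set g' : ℝ → ℝ := fun s => (F' (Sset Td X zF s)).toReal with hg'_def
  set g'' : ℝ → ℝ := fun s => (F' (Sset Td X zF' s)).toReal with hg''_def
  have mg : Measurable g := (measurable_F_Sset hTdm hXm hzF F).ennreal_toReal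
  have mg' : Measurable g' := (measurable_F_Sset hTdm hXm hzF F').ennreal_toReal
  have mg'' : Measurable g'' := (measurable_F_Sset hTdm hXm hzF' F').ennreal_toReal
  have hg_nn : ∀ s, 0 ≤ g s := fun s => ENNReal.toReal_nonneg
  have hg'_nn : ∀ s, 0 ≤ g' s := fun s => ENNReal.toReal_nonneg
  have hg''_nn : ∀ s, 0 ≤ g'' s := fun s => ENNReal.toReal_nonneg
  have htoReal_le1 : ∀ (μ : Measure (ℝ × ℝ)) [IsProbabilityMeasure μ] (S : Set (ℝ × ℝ)),
      (μ S).toReal ≤ 1 := by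
    intro μ _ S
    have h := prob_le_one (μ := μ) (s := S)
    simpa using ENNReal.toReal_mono ENNReal.one_ne_top h
  have hg_le1 : ∀ s, g s ≤ 1 := fun s => htoReal_le1 F _
  have hg'_le1 : ∀ s, g' s ≤ 1 := fun s => htoReal_le1 F' _
  -- Lipschitz extension of V
  have hV' : LipschitzWith LV (fun c : ℝ => V (max c 0)) := by
    have hmax : LipschitzWith 1 (fun c : ℝ => max c 0) := LipschitzWith.of_dist_le_mul (by
      intro a b
      simp only [Real.dist_eq, NNReal.coe_one, one_mul]
      exact abs_max_sub_max_le_abs a b 0)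
    have := hV.comp (hmax.lipschitzOnWith (s := Set.univ)) (fun c _ => le_max_right c 0)
    rw [lipschitzOnWith_univ, mul_one] at this
    exact this
  have hVmeasg : Measurable fun s => V (g s) := by
    have : (fun s => V (g s)) = (fun c => V (max c 0)) ∘ g := by
      funext s; simp [max_eq_left (hg_nn s)]
    rw [this]; exact hV'.continuous.measurable.comp mg
  have hVmeasg'' : Measurable fun s => V (g'' s) := by
    have : (fun s => V (g'' s)) = (fun c => V (max c 0)) ∘ g'' := by
      funext s; simp [max_eq_left (hg''_nn s)]
    rw [this]; exact hV'.continuous.measurable.comp mg''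
  have hlip : ∀ a b : ℝ, 0 ≤ a → 0 ≤ b → |V a - V b| ≤ (LV:ℝ) * |a - b| := by
    intro a b ha hb
    have := (lipschitzOnWith_iff_dist_le_mul.mp hV) a ha b hb
    simpa [Real.dist_eq] using this
  have hVbound : ∀ c : ℝ, 0 ≤ c → |V c| ≤ Vmax := fun c hc => by
    obtain ⟨h1, h2⟩ := hVbd c hc
    rw [abs_of_pos (lt_of_lt_of_le hVmin h1)]; exact h2
  have hintVg : ∀ a b : ℝ, IntervalIntegrable (fun s => V (g s)) volume a b :=
    fun a b => intervalIntegrable_of_bounded' hVmeasg (fun s => hVbound _ (hg_nn s))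
  have hintVg'' : ∀ a b : ℝ, IntervalIntegrable (fun s => V (g'' s)) volume a b :=
    fun a b => intervalIntegrable_of_bounded' hVmeasg'' (fun s => hVbound _ (hg''_nn s))
  have hintgg' : ∀ a b : ℝ, IntervalIntegrable (fun s => |g s - g' s|) volume a b :=
    fun a b => intervalIntegrable_of_bounded' (mg.sub mg').abs (C := 2) (fun s => by
      rw [abs_abs]
      have := abs_sub (g s) (g' s)
      calc |g s - g' s| ≤ |g s| + |g' s| := abs_sub _ _
        _ ≤ 2 := by
            rw [abs_of_nonneg (hg_nn s), abs_of_nonneg (hg'_nn s)]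
            linarith [hg_le1 s, hg'_le1 s])
  set I : ℝ := ∫ s in (0:ℝ)..Tmax, |g s - g' s| with hI_def
  have hI_nn : 0 ≤ I :=
    intervalIntegral.integral_nonneg hT.le (fun s _ => abs_nonneg _)
  -- difference of the fixed points
  have hzdiff : ∀ u ∈ Set.Icc (0:ℝ) Tmax,
      zF u - zF' u = ∫ s in (0:ℝ)..u, (V (g s) - V (g'' s)) := by
    intro u hu
    rw [hfix u hu, hfix' u hu]
    simp only [Umap]
    exact (intervalIntegral.integral_sub (hintVg 0 u) (hintVg'' 0 u)).symm
  set w : ℝ → ℝ := fun s => |zF s - zF' s| with hw_def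
  have hw_cont : Continuous w := by fun_prop
  have hw_nn : ∀ s, 0 ≤ w s := fun s => abs_nonneg _
  set φ : ℝ → ℝ := fun s => Real.exp (-(M * s)) * w s with hφ_def
  have hφ_cont : Continuous φ := by fun_prop
  obtain ⟨t₀, ht₀, hmax⟩ := isCompact_Icc.exists_isMaxOn (s := Set.Icc (0:ℝ) Tmax)
    (Set.nonempty_Icc.mpr hT.le) hφ_cont.continuousOn
  set A : ℝ := φ t₀ with hA_def
  have hA_nn : 0 ≤ A := mul_nonneg (Real.exp_pos _).le (hw_nn t₀)
  have hwA : ∀ s ∈ Set.Icc (0:ℝ) Tmax, w s ≤ Real.exp (M * s) * A := by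
    intro s hs
    have h1 : φ s ≤ A := hmax hs
    have h2 : Real.exp (M * s) * Real.exp (-(M * s)) = 1 := by rw [← Real.exp_add]; simp
    calc w s = Real.exp (M * s) * (Real.exp (-(M * s)) * w s) := by
          rw [← mul_assoc, h2, one_mul]
      _ ≤ Real.exp (M * s) * A := mul_le_mul_of_nonneg_left h1 (Real.exp_pos _).le
  have hexpint : ∀ s : ℝ, (∫ τ in (0:ℝ)..s, Real.exp (M * τ))
      = (Real.exp (M * s) - 1) / M := by
    intro s
    have hder : ∀ τ ∈ Set.uIcc (0:ℝ) s,
        HasDerivAt (fun τ => Real.exp (M * τ) / M) (Real.exp (M * τ)) τ := by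
      intro τ _
      have h1 : HasDerivAt (fun x : ℝ => Real.exp (M * x)) (Real.exp (M * τ) * (M * 1)) τ :=
        ((hasDerivAt_id τ).const_mul M).exp
      have h2 := h1.div_const M
      refine h2.congr_deriv ?_
      field_simp
    rw [intervalIntegral.integral_eq_sub_of_hasDerivAt hder
      ((Continuous.intervalIntegrable (by fun_prop)) 0 s)]
    rw [mul_zero, Real.exp_zero]
    ring
  -- key bound at each time s in [0, Tmax]
  have hgg'' : ∀ s ∈ Set.Icc (0:ℝ) Tmax,
      |g' s - g'' s| ≤ G * (s * (Real.exp (M * s) * A) + A * ((Real.exp (M * s) - 1) / M)) := by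
    intro s hs
    have e1 := Sset_toReal_diff_bound hTdm hXm hzF hzF' F' hG.le hF'b hs.1
    have e2 := Sset_toReal_diff_bound hTdm hXm hzF' hzF F' hG.le hF'b hs.1
    have hrw : (fun τ => |zF' s - zF s| + |zF' τ - zF τ|)
        = fun τ => |zF s - zF' s| + |zF τ - zF' τ| := by
      funext τ; rw [abs_sub_comm, abs_sub_comm (zF' τ)]
    rw [hrw] at e2
    have hJexp : (∫ τ in (0:ℝ)..s, (|zF s - zF' s| + |zF τ - zF' τ|))
        ≤ s * (Real.exp (M * s) * A) + A * ((Real.exp (M * s) - 1) / M) := by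
      have hadd : (∫ τ in (0:ℝ)..s, (|zF s - zF' s| + |zF τ - zF' τ|))
          = s * w s + ∫ τ in (0:ℝ)..s, w τ := by
        rw [intervalIntegral.integral_add intervalIntegrable_const
          (hw_cont.intervalIntegrable 0 s)]
        rw [intervalIntegral.integral_const]
        simp only [hw_def, smul_eq_mul, sub_zero]
      have hwint : (∫ τ in (0:ℝ)..s, w τ) ≤ A * ((Real.exp (M * s) - 1) / M) := by
        have hcmp : (∫ τ in (0:ℝ)..s, w τ) ≤ ∫ τ in (0:ℝ)..s, Real.exp (M * τ) * A := by
          apply intervalIntegral.integral_mono_on hs.1 (hw_cont.intervalIntegrable 0 s)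
            ((Continuous.intervalIntegrable (by fun_prop)) 0 s)
          intro τ hτ
          exact hwA τ ⟨hτ.1, le_trans hτ.2 hs.2⟩
        rw [intervalIntegral.integral_mul_const, hexpint s] at hcmp
        calc (∫ τ in (0:ℝ)..s, w τ) ≤ (Real.exp (M * s) - 1) / M * A := hcmp
          _ = A * ((Real.exp (M * s) - 1) / M) := by ring
      have hws : s * w s ≤ s * (Real.exp (M * s) * A) :=
        mul_le_mul_of_nonneg_left (hwA s hs) hs.1
      linarith
    have hGnn := hG.le
    have e1' : g' s ≤ g'' s + G * ∫ τ in (0:ℝ)..s, (|zF s - zF' s| + |zF τ - zF' τ|) := e1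
    have e2' : g'' s ≤ g' s + G * ∫ τ in (0:ℝ)..s, (|zF s - zF' s| + |zF τ - zF' τ|) := e2
    have hGJ := mul_le_mul_of_nonneg_left hJexp hGnn
    rw [abs_sub_le_iff]
    exact ⟨by linarith, by linarith⟩
  -- pointwise bound for the integrand
  have hpoint : ∀ s ∈ Set.Icc (0:ℝ) t₀,
      |V (g s) - V (g'' s)| ≤ (LV:ℝ) * |g s - g' s|
        + (LV:ℝ) * G * A * (s * Real.exp (M * s) + (Real.exp (M * s) - 1) / M) := by
    intro s hs
    have hsT : s ∈ Set.Icc (0:ℝ) Tmax := ⟨hs.1, le_trans hs.2 ht₀.2⟩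
    have h1 : |V (g s) - V (g'' s)| ≤ (LV:ℝ) * |g s - g'' s| :=
      hlip _ _ (hg_nn s) (hg''_nn s)
    have h2 : |g s - g'' s| ≤ |g s - g' s| + |g' s - g'' s| := abs_sub_le _ _ _
    have h3 := hgg'' s hsT
    have h4 := mul_le_mul_of_nonneg_left h2 hLVnn
    have h5 := mul_le_mul_of_nonneg_left h3 hLVnn
    have hring : (LV:ℝ) * (G * (s * (Real.exp (M * s) * A) + A * ((Real.exp (M * s) - 1) / M)))
        = (LV:ℝ) * G * A * (s * Real.exp (M * s) + (Real.exp (M * s) - 1) / M) := by ring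
    calc |V (g s) - V (g'' s)| ≤ (LV:ℝ) * |g s - g'' s| := h1
      _ ≤ (LV:ℝ) * (|g s - g' s| + |g' s - g'' s|) := h4
      _ ≤ (LV:ℝ) * |g s - g' s|
          + (LV:ℝ) * G * A * (s * Real.exp (M * s) + (Real.exp (M * s) - 1) / M) := by
          rw [← hring]; nlinarith [h5]
  -- FTC for the weight integral
  have hψ : (∫ s in (0:ℝ)..t₀, (s * Real.exp (M * s) + (Real.exp (M * s) - 1) / M))
      = t₀ * (Real.exp (M * t₀) - 1) / M := by
    have hder : ∀ s ∈ Set.uIcc (0:ℝ) t₀,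
        HasDerivAt (fun s => s * (Real.exp (M * s) - 1) / M)
          (s * Real.exp (M * s) + (Real.exp (M * s) - 1) / M) s := by
      intro s _
      have h1 : HasDerivAt (fun x : ℝ => Real.exp (M * x)) (Real.exp (M * s) * (M * 1)) s :=
        ((hasDerivAt_id s).const_mul M).exp
      have h2 : HasDerivAt (fun x : ℝ => Real.exp (M * x) - 1) (Real.exp (M * s) * (M * 1)) s :=
        h1.sub_const 1
      have h3 := (hasDerivAt_id s).mul h2
      have h4 := h3.div_const M
      refine h4.congr_deriv ?_
      simp only [id_eq]
      field_simp
      ring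
    rw [intervalIntegral.integral_eq_sub_of_hasDerivAt hder
      ((Continuous.intervalIntegrable (by fun_prop)) 0 t₀)]
    rw [mul_zero, Real.exp_zero]
    ring
  -- integral comparison on [0, t₀]
  have hwt₀ : w t₀ ≤ (LV:ℝ) * I + (LV:ℝ) * G * A * (t₀ * (Real.exp (M * t₀) - 1) / M) := by
    have hd := hzdiff t₀ ht₀
    have habs : w t₀ ≤ ∫ s in (0:ℝ)..t₀, |V (g s) - V (g'' s)| := by
      have : w t₀ = |∫ s in (0:ℝ)..t₀, (V (g s) - V (g'' s))| := by
        simp only [hw_def]; rw [hd]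
      rw [this]
      exact intervalIntegral.abs_integral_le_integral_abs ht₀.1
    have hint1 : IntervalIntegrable (fun s => |V (g s) - V (g'' s)|) volume 0 t₀ :=
      intervalIntegrable_of_bounded' (hVmeasg.sub hVmeasg'').abs (C := Vmax + Vmax)
        (fun s => by
          rw [abs_abs]
          calc |V (g s) - V (g'' s)| ≤ |V (g s)| + |V (g'' s)| := abs_sub _ _
            _ ≤ Vmax + Vmax := add_le_add (hVbound _ (hg_nn s)) (hVbound _ (hg''_nn s)))
    have hint2a : IntervalIntegrable (fun s => (LV:ℝ) * |g s - g' s|) volume 0 t₀ :=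
      (hintgg' 0 t₀).const_mul _
    have hint2b : IntervalIntegrable
        (fun s => (LV:ℝ) * G * A * (s * Real.exp (M * s) + (Real.exp (M * s) - 1) / M))
        volume 0 t₀ := (Continuous.intervalIntegrable (by fun_prop)) 0 t₀
    have hcmp := intervalIntegral.integral_mono_on ht₀.1 hint1 (hint2a.add hint2b) hpoint
    rw [intervalIntegral.integral_add hint2a hint2b,
      intervalIntegral.integral_const_mul, intervalIntegral.integral_const_mul, hψ] at hcmp
    have hII : (∫ s in (0:ℝ)..t₀, |g s - g' s|) ≤ I := by
      have hsplit := intervalIntegral.integral_add_adjacent_intervals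
        (hintgg' 0 t₀) (hintgg' t₀ Tmax)
      have hnn2 : 0 ≤ ∫ s in t₀..Tmax, |g s - g' s| :=
        intervalIntegral.integral_nonneg ht₀.2 (fun _ _ => abs_nonneg _)
      have hIeq : I = ∫ s in (0:ℝ)..Tmax, |g s - g' s| := hI_def
      linarith
    have hLV2 := mul_le_mul_of_nonneg_left hII hLVnn
    have hmul : (LV:ℝ) * G * A * (t₀ * (Real.exp (M * t₀) - 1) / M)
        = (LV:ℝ) * G * A * t₀ * (Real.exp (M * t₀) - 1) / M := by ring
    linarith [habs, hcmp]
  -- contraction estimate for A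
  have hE' := Real.exp_pos (-(M * t₀))
  have hexpinv : Real.exp (M * t₀) * Real.exp (-(M * t₀)) = 1 := by
    rw [← Real.exp_add]; simp
  have hkey := exp_key2 (mul_nonneg hM.le ht₀.1)
    (mul_le_mul_of_nonneg_left ht₀.2 hM.le)
  have hterm2 : (LV:ℝ) * G * A * (t₀ * (Real.exp (M * t₀) - 1) / M) * Real.exp (-(M * t₀))
      ≤ lam * A := by
    have h1me : (Real.exp (M * t₀) - 1) * Real.exp (-(M * t₀)) = 1 - Real.exp (-(M * t₀)) := by
      rw [sub_mul, hexpinv, one_mul]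
    have hc : t₀ * (Real.exp (M * t₀) - 1) / M * Real.exp (-(M * t₀))
        = M * t₀ * (1 - Real.exp (-(M * t₀))) / M ^ 2 := by
      have : t₀ * (Real.exp (M * t₀) - 1) / M * Real.exp (-(M * t₀))
          = t₀ * ((Real.exp (M * t₀) - 1) * Real.exp (-(M * t₀))) / M := by ring
      rw [this, h1me]
      field_simp
    have h2 : M * t₀ * (1 - Real.exp (-(M * t₀))) / M ^ 2
        ≤ 2 * (M * Tmax - 1 + Real.exp (-(M * Tmax))) / M ^ 2 :=
      (div_le_div_iff_of_pos_right (by positivity)).mpr hkey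
    calc (LV:ℝ) * G * A * (t₀ * (Real.exp (M * t₀) - 1) / M) * Real.exp (-(M * t₀))
        = (LV:ℝ) * G * A * (M * t₀ * (1 - Real.exp (-(M * t₀))) / M ^ 2) := by
          rw [← hc]; ring
      _ ≤ (LV:ℝ) * G * A * (2 * (M * Tmax - 1 + Real.exp (-(M * Tmax))) / M ^ 2) :=
          mul_le_mul_of_nonneg_left h2 (by positivity)
      _ = lam * A := by rw [hlam_def]; ring
  have hA2 : A ≤ (LV:ℝ) * I + lam * A := by
    have hstep := mul_le_mul_of_nonneg_right hwt₀ hE'.le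
    have hE'le1 : Real.exp (-(M * t₀)) ≤ 1 :=
      Real.exp_le_one_iff.mpr (by nlinarith [ht₀.1, hM.le])
    have hLI : 0 ≤ (LV:ℝ) * I := mul_nonneg hLVnn hI_nn
    have hAe : A = w t₀ * Real.exp (-(M * t₀)) := by
      simp only [hA_def, hφ_def]; ring
    have hdist : ((LV:ℝ) * I + (LV:ℝ) * G * A * (t₀ * (Real.exp (M * t₀) - 1) / M))
        * Real.exp (-(M * t₀))
        = (LV:ℝ) * I * Real.exp (-(M * t₀))
          + (LV:ℝ) * G * A * (t₀ * (Real.exp (M * t₀) - 1) / M) * Real.exp (-(M * t₀)) := by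
      ring
    have h6 := mul_le_mul_of_nonneg_left hE'le1 hLI
    linarith [hstep, hterm2, h6, hAe.le, hAe.ge, hdist.le, hdist.ge]
  have hAle : A ≤ (LV:ℝ) * I / (1 - lam) := by
    rw [le_div_iff₀ h1lam]
    nlinarith [hA2]
  have hwt : w t ≤ Real.exp (M * Tmax) * ((LV:ℝ) * I / (1 - lam)) := by
    calc w t ≤ Real.exp (M * t) * A := hwA t ht
      _ ≤ Real.exp (M * Tmax) * A := by
          apply mul_le_mul_of_nonneg_right _ hA_nn
          exact Real.exp_le_exp.mpr (mul_le_mul_of_nonneg_left ht.2 hM.le)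
      _ ≤ Real.exp (M * Tmax) * ((LV:ℝ) * I / (1 - lam)) :=
          mul_le_mul_of_nonneg_left hAle (Real.exp_pos _).le
  have hmono : ∀ u v : ℝ, 0 ≤ u → u ≤ v → v ≤ Tmax → Vmin * (v - u) ≤ zF' v - zF' u := by
    intro u v hu huv hvT
    have h1 : zF' v - zF' u = ∫ s in u..v, V (g'' s) := by
      rw [hfix' v ⟨le_trans hu huv, hvT⟩, hfix' u ⟨hu, le_trans huv hvT⟩]
      simp only [Umap]
      show (∫ s in (0:ℝ)..v, V (g'' s)) - (∫ s in (0:ℝ)..u, V (g'' s))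
        = ∫ s in u..v, V (g'' s)
      exact intervalIntegral.integral_interval_sub_left (hintVg'' 0 v) (hintVg'' 0 u)
    have h2 : (∫ _ in u..v, Vmin) ≤ ∫ s in u..v, V (g'' s) := by
      apply intervalIntegral.integral_mono_on huv intervalIntegrable_const (hintVg'' u v)
      intro s _
      exact (hVbd _ (hg''_nn s)).1
    rw [intervalIntegral.integral_const, smul_eq_mul] at h2
    rw [h1]
    nlinarith [h2]
  have hVt : Vmin * |t - t'| ≤ |zF' t - zF' t'| := by
    rcases le_total t t' with h | h
    · have h1 := hmono t t' ht.1 h ht'.2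
      have h2 : 0 ≤ zF' t' - zF' t :=
        le_trans (mul_nonneg hVmin.le (by linarith)) h1
      rw [abs_sub_comm t t', abs_of_nonneg (by linarith : (0:ℝ) ≤ t' - t),
        abs_sub_comm (zF' t), abs_of_nonneg h2]
      linarith
    · have h1 := hmono t' t ht'.1 h ht.2
      have h2 : 0 ≤ zF' t - zF' t' :=
        le_trans (mul_nonneg hVmin.le (by linarith)) h1
      rw [abs_of_nonneg (by linarith : (0:ℝ) ≤ t - t'), abs_of_nonneg h2]
      linarith
  have htri : |zF' t - zF' t'| ≤ w t + |x - x'| := by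
    have heq : zF' t - zF' t' = -(zF t - zF' t) + (x - x') := by
      rw [← hx, ← hx']; ring
    have hwt' : |zF t - zF' t| = w t := rfl
    calc |zF' t - zF' t'| = |-(zF t - zF' t) + (x - x')| := by rw [heq]
      _ ≤ |-(zF t - zF' t)| + |x - x'| := abs_add_le _ _
      _ = w t + |x - x'| := by rw [abs_neg, hwt']
  have hfinal : Vmin * |t - t'| ≤ |x - x'|
      + Real.exp (M * Tmax) * ((LV:ℝ) * I / (1 - lam)) := by
    linarith [hVt, htri, hwt]
  have hgoal : |t - t'| ≤ (|x - x'|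
      + Real.exp (M * Tmax) * ((LV:ℝ) * I / (1 - lam))) / Vmin := by
    rw [le_div_iff₀ hVmin]
    linarith [hfinal]
  have hgoal2 : |t - t'|
      ≤ |x - x'| / Vmin + Real.exp (M * Tmax) * (LV:ℝ) / ((1 - lam) * Vmin) * I := by
    calc |t - t'| ≤ (|x - x'| + Real.exp (M * Tmax) * ((LV:ℝ) * I / (1 - lam))) / Vmin := hgoal
      _ = |x - x'| / Vmin + Real.exp (M * Tmax) * (LV:ℝ) / ((1 - lam) * Vmin) * I := by
          field_simp
  exact hgoal2
end
end

section
/- Let v : ℝ → (0,∞) be continuous, define z(t) := ∫₀ᵗ v(s) ds (so z is strictly increasing with a differentiable inverse z^{−1} on its range), and for a fixed trip length x > 0 define the travel time T(t, x) := z^{−1}(x + z(t)) − t on the set of t for which x + z(t) lies in the range of z. Then t ↦ T(t, x) is differentiable there and ∂ₜT(t, x) = v(t)/v(t + T(t, x)) − 1. -/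
open MeasureTheory Set

/-- derivative of the travel time. Let `v : ℝ → (0,∞)` be continuous,
`z t = ∫₀ᵗ v(s) ds` (so `z` is strictly increasing with differentiable inverse on its
range), and for a fixed trip length `x > 0` let `T t = z⁻¹(x + z t) − t` wherever
`x + z t` lies in the range of `z`. Then `T` is differentiable at every such point and
`∂ₜT(t,x) = v(t)/v(t + T(t,x)) − 1`. -/
theorem travel_time_hasDerivAt
    (v : ℝ → ℝ) (hv : Continuous v) (hvpos : ∀ t : ℝ, 0 < v t)
    (z : ℝ → ℝ) (hz : ∀ t, z t = ∫ s in (0:ℝ)..t, v s)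
    (x : ℝ) (hx : 0 < x)
    (T : ℝ → ℝ) (hT : ∀ t, T t = Function.invFun z (x + z t) - t)
    (t₀ : ℝ) (ht₀ : x + z t₀ ∈ Set.range z) :
    HasDerivAt T (v t₀ / v (t₀ + T t₀) - 1) t₀ := by
  -- z has strict derivative v t at every t
  have hzfun : z = fun t => ∫ s in (0:ℝ)..t, v s := funext hz
  have hzderiv : ∀ t : ℝ, HasStrictDerivAt z (v t) t := by
    intro t
    rw [hzfun]
    exact intervalIntegral.integral_hasStrictDerivAt_right
      (hv.intervalIntegrable _ _) (hv.stronglyMeasurableAtFilter _ _) hv.continuousAt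
  -- z is strictly monotone, hence injective
  have hzmono : StrictMono z := by
    intro a b hab
    have h1 : z b - z a = ∫ s in a..b, v s := by
      simp only [hzfun]
      rw [← intervalIntegral.integral_add_adjacent_intervals
        (hv.intervalIntegrable 0 a) (hv.intervalIntegrable a b)]
      ring
    have h2 : 0 < ∫ s in a..b, v s :=
      intervalIntegral.intervalIntegral_pos_of_pos (hv.intervalIntegrable a b)
        (fun s => hvpos s) hab
    linarith
  have hzinj : Function.Injective z := hzmono.injective
  have hleft : Function.LeftInverse (Function.invFun z) z :=
    Function.leftInverse_invFun hzinj
  obtain ⟨u, hu⟩ := ht₀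
  -- the inverse function has strict derivative (v u)⁻¹ at z u = x + z t₀
  have hvne : v u ≠ 0 := (hvpos u).ne'
  have hginv : HasStrictDerivAt (Function.invFun z) (v u)⁻¹ (z u) :=
    (hzderiv u).to_local_left_inverse hvne
      (Filter.Eventually.of_forall fun y => hleft y)
  have hg : HasDerivAt (Function.invFun z) (v u)⁻¹ (x + z t₀) := by
    rw [← hu]; exact hginv.hasDerivAt
  -- inner function t ↦ x + z t
  have hinner : HasDerivAt (fun t => x + z t) (v t₀) t₀ :=
    (hzderiv t₀).hasDerivAt.const_add x
  have hcomp : HasDerivAt (fun t => Function.invFun z (x + z t)) ((v u)⁻¹ * v t₀) t₀ :=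
    by have := hg.comp t₀ hinner; exact this
  have hTfun : T = fun t => Function.invFun z (x + z t) - t := funext hT
  have hTd : HasDerivAt T ((v u)⁻¹ * v t₀ - 1) t₀ := by
    rw [hTfun]
    exact hcomp.sub (hasDerivAt_id t₀)
  -- rewrite the derivative value
  have hT₀ : t₀ + T t₀ = u := by
    rw [hT t₀, ← hu, hleft u]; ring
  have : v t₀ / v (t₀ + T t₀) - 1 = (v u)⁻¹ * v t₀ - 1 := by
    rw [hT₀]; field_simp
  rw [this]
  exact hTd
end

section
/- Let v : ℝ → (0,∞) be continuous, z(t) := ∫₀ᵗ v(s) ds, and for a trip length x > 0 let T(t, x) := z^{−1}(x + z(t)) − t. Fix constants α > β > 0 and γ > 0 and a desired arrival time t_a, and define the cost J(t_d) := α·T(t_d, x) + β·max(t_a − t_d − T(t_d, x), 0) + γ·max(t_d + T(t_d, x) − t_a, 0). Suppose t_d* is an interior minimizer of J on the (compact) set of admissible departure times. Then α/(α + γ) ≤ v(t_d*)/v(t_d* + T(t_d*, x)) ≤ α/(α − β). Moreover, if t_a > t_d* + T(t_d*, x) (early arrival) then v(t_d*)/v(t_d* + T(t_d*, x)) = α/(α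 − β), and if t_a < t_d* + T(t_d*, x) (late arrival) then v(t_d*)/v(t_d* + T(t_d*, x)) = α/(α + γ). -/
open MeasureTheory Set Filter Topology Function

/-- Proposition 6: first-order optimality conditions for the departure
time. -/
theorem departure_time_first_order_conditions
    (v : ℝ → ℝ) (hv : Continuous v) (hvpos : ∀ t : ℝ, 0 < v t)
    (z : ℝ → ℝ) (hz : ∀ t, z t = ∫ s in (0:ℝ)..t, v s)
    (x : ℝ) (hx : 0 < x)
    (hrange : ∀ t : ℝ, x + z t ∈ Set.range z)
    (T : ℝ → ℝ) (hT : ∀ t, T t = Function.invFun z (x + z t) - t)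
    (α β γ ta : ℝ) (hβ : 0 < β) (hαβ : β < α) (hγ : 0 < γ)
    (J : ℝ → ℝ)
    (hJ : ∀ td, J td = α * T td + β * max (ta - td - T td) 0 + γ * max (td + T td - ta) 0)
    (K : Set ℝ) (hK : IsCompact K)
    (td : ℝ) (htd : td ∈ interior K) (hmin : ∀ t ∈ K, J td ≤ J t) :
    (α / (α + γ) ≤ v td / v (td + T td) ∧ v td / v (td + T td) ≤ α / (α - β)) ∧
    (td + T td < ta → v td / v (td + T td) = α / (α - β)) ∧
    (ta < td + T td → v td / v (td + T td) = α / (α + γ)) := by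
  -- derivative of z
  have hzfun : z = fun u => ∫ s in (0:ℝ)..u, v s := funext hz
  have hzd : ∀ t : ℝ, HasDerivAt z (v t) t := by
    intro t
    rw [hzfun]
    exact intervalIntegral.integral_hasDerivAt_right (hv.intervalIntegrable 0 t)
      (hv.stronglyMeasurableAtFilter _ _) hv.continuousAt
  have zc : Continuous z := by
    rw [continuous_iff_continuousAt]; exact fun t => (hzd t).continuousAt
  have zmono : StrictMono z := by
    apply strictMono_of_deriv_pos
    intro t; rw [(hzd t).deriv]; exact hvpos t
  set A : ℝ → ℝ := fun t => Function.invFun z (x + z t) with hA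
  have hAz : ∀ t, z (A t) = x + z t := fun t => Function.invFun_eq (hrange t)
  have hAt : ∀ t, t + T t = A t := by
    intro t; rw [hT]; ring
  have Amono : StrictMono A := by
    intro s t hst
    have : z (A s) < z (A t) := by rw [hAz, hAz]; linarith [zmono hst]
    exact zmono.lt_iff_lt.mp this
  have lt_A : ∀ t, t < A t := by
    intro t
    have : z t < z (A t) := by rw [hAz]; linarith
    exact zmono.lt_iff_lt.mp this
  -- range z is order-connected and a neighborhood of x + z td
  have hconn : OrdConnected (range z) :=
    (isPreconnected_range zc).ordConnected
  have hnhds : range z ∈ 𝓝 (x + z td) := by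
    have h1 : z td < x + z td := by linarith
    have h2 : x + z td < z (A (td + 1)) := by
      rw [hAz]; linarith [zmono (lt_add_one td)]
    exact Filter.mem_of_superset (Icc_mem_nhds h1 h2)
      (hconn.out (mem_range_self td) (mem_range_self (A (td + 1))))
  -- continuity of the inverse at x + z td
  have hgmono : StrictMonoOn (Function.invFun z) (range z) := by
    rintro y1 ⟨t1, rfl⟩ y2 ⟨t2, rfl⟩ hlt
    rw [Function.leftInverse_invFun zmono.injective t1,
      Function.leftInverse_invFun zmono.injective t2]
    exact zmono.lt_iff_lt.mp hlt
  have hgc : ContinuousAt (Function.invFun z) (x + z td) := by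
    apply hgmono.continuousAt_of_image_mem_nhds hnhds
    apply Filter.mem_of_superset univ_mem
    rintro t -
    exact ⟨z t, mem_range_self t, Function.leftInverse_invFun zmono.injective t⟩
  -- derivative of the inverse and of A, T
  have hg' : HasDerivAt (Function.invFun z) (v (A td))⁻¹ (x + z td) := by
    apply HasDerivAt.of_local_left_inverse hgc (hzd (A td)) (hvpos (A td)).ne'
    exact Filter.eventually_of_mem hnhds fun y hy => Function.invFun_eq hy
  have hA' : HasDerivAt A ((v (A td))⁻¹ * v td) td := by
    have hinner : HasDerivAt (fun t => x + z t) (v td) td := (hzd td).const_add x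
    exact hg'.comp td hinner
  set W : ℝ := v td / v (A td) with hW
  have hWd : (v (A td))⁻¹ * v td = W := by rw [hW]; ring
  have hT' : HasDerivAt T (W - 1) td := by
    have : HasDerivAt (fun t => A t - t) (W - 1) td := by
      rw [← hWd]
      exact hA'.sub (hasDerivAt_id td)
    apply this.congr_of_eventuallyEq
    filter_upwards with t
    rw [hT]
  have hAtd : td + T td = A td := hAt td
  rw [hAtd]
  -- local min
  have hlm : IsLocalMin J td :=
    Filter.eventually_of_mem (mem_interior_iff_mem_nhds.mp htd) fun t ht => hmin t ht
  -- the two smooth pieces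
  set g₁ : ℝ → ℝ := fun t => (α - β) * T t + β * (ta - t) with hg₁def
  set g₂ : ℝ → ℝ := fun t => (α + γ) * T t + γ * (t - ta) with hg₂def
  have hg₁' : HasDerivAt g₁ ((α - β) * (W - 1) + β * (-1)) td :=
    (hT'.const_mul (α - β)).add (((hasDerivAt_id td).const_sub ta).const_mul β)
  have hg₂' : HasDerivAt g₂ ((α + γ) * (W - 1) + γ * 1) td :=
    (hT'.const_mul (α + γ)).add (((hasDerivAt_id td).sub_const ta).const_mul γ)
  have E1 : ∀ t, A t ≤ ta → J t = g₁ t := by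
    intro t h
    have h' : t + T t ≤ ta := by rw [hAt]; exact h
    rw [hJ, hg₁def]
    rw [max_eq_left (by linarith), max_eq_right (by linarith)]
    ring
  have E2 : ∀ t, ta ≤ A t → J t = g₂ t := by
    intro t h
    have h' : ta ≤ t + T t := by rw [hAt]; exact h
    rw [hJ, hg₂def]
    rw [max_eq_right (by linarith), max_eq_left (by linarith)]
    ring
  have hαβ' : (0:ℝ) < α - β := by linarith
  have hαγ' : (0:ℝ) < α + γ := by linarith
  -- trichotomy
  rcases lt_trichotomy (A td) ta with hcase | hcase | hcase
  · -- early arrival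
    have hev : ∀ᶠ t in 𝓝 td, A t ≤ ta := by
      have := hA'.continuousAt (Iio_mem_nhds hcase)
      exact Filter.eventually_of_mem this fun t ht => le_of_lt ht
    have heq : J =ᶠ[𝓝 td] g₁ := hev.mono fun t ht => E1 t ht
    have hlmg : IsLocalMin g₁ td := hlm.congr heq
    have hd : (α - β) * (W - 1) + β * (-1) = 0 := hlmg.hasDerivAt_eq_zero hg₁'
    have hWeq : W = α / (α - β) := by
      rw [eq_div_iff hαβ'.ne']
      nlinarith
    rw [← hW]
    refine ⟨⟨?_, hWeq.le⟩, fun _ => hWeq, fun h => absurd h (by linarith)⟩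
    rw [hWeq]
    apply div_le_div_of_nonneg_left (by linarith) hαβ' (by linarith)
  · -- on-time arrival
    have hd₁ : (α - β) * (W - 1) + β * (-1) ≤ 0 := by
      have htend : Tendsto (slope g₁ td) (𝓝[<] td) (𝓝 ((α - β) * (W - 1) + β * (-1))) :=
        (hasDerivAt_iff_tendsto_slope.mp hg₁').mono_left
          (nhdsWithin_mono td fun y hy => ne_of_lt hy)
      refine le_of_tendsto htend ?_
      filter_upwards [hlm.filter_mono nhdsWithin_le_nhds, self_mem_nhdsWithin] with t ht ht'
      have hAle : A t ≤ ta := by rw [← hcase]; exact (Amono.le_iff_le).mpr (le_of_lt ht')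
      have hnum : 0 ≤ g₁ t - g₁ td := by
        rw [← E1 t hAle, ← E1 td (le_of_eq hcase)]; linarith [ht]
      have hden : t - td ≤ 0 := by
        simp only [mem_Iio] at ht'; linarith
      rw [slope_def_field]
      exact div_nonpos_of_nonneg_of_nonpos hnum hden
    have hd₂ : 0 ≤ (α + γ) * (W - 1) + γ * 1 := by
      have htend : Tendsto (slope g₂ td) (𝓝[>] td) (𝓝 ((α + γ) * (W - 1) + γ * 1)) :=
        (hasDerivAt_iff_tendsto_slope.mp hg₂').mono_left
          (nhdsWithin_mono td fun y hy => ne_of_gt hy)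
      refine ge_of_tendsto htend ?_
      filter_upwards [hlm.filter_mono nhdsWithin_le_nhds, self_mem_nhdsWithin] with t ht ht'
      have hAge : ta ≤ A t := by rw [← hcase]; exact (Amono.le_iff_le).mpr (le_of_lt ht')
      have hnum : 0 ≤ g₂ t - g₂ td := by
        rw [← E2 t hAge, ← E2 td (ge_of_eq hcase)]; linarith [ht]
      have hden : 0 ≤ t - td := by
        simp only [mem_Ioi] at ht'; linarith
      rw [slope_def_field]
      exact div_nonneg hnum hden
    rw [← hW]
    refine ⟨⟨?_, ?_⟩, fun h => absurd h (by linarith), fun h => absurd h (by linarith)⟩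
    · rw [div_le_iff₀ hαγ']; nlinarith
    · rw [le_div_iff₀ hαβ']; nlinarith
  · -- late arrival
    have hev : ∀ᶠ t in 𝓝 td, ta ≤ A t := by
      have := hA'.continuousAt (Ioi_mem_nhds hcase)
      exact Filter.eventually_of_mem this fun t ht => le_of_lt ht
    have heq : J =ᶠ[𝓝 td] g₂ := hev.mono fun t ht => E2 t ht
    have hlmg : IsLocalMin g₂ td := hlm.congr heq
    have hd : (α + γ) * (W - 1) + γ * 1 = 0 := hlmg.hasDerivAt_eq_zero hg₂'
    have hWeq : W = α / (α + γ) := by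
      rw [eq_div_iff hαγ'.ne']
      nlinarith
    rw [← hW]
    refine ⟨⟨hWeq.ge, ?_⟩, fun h => absurd h (by linarith), fun _ => hWeq⟩
    rw [hWeq]
    apply div_le_div_of_nonneg_left (by linarith) hαβ' (by linarith)
end
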